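/- arXiv:1407.6076 — 8 statements merged into one kernel-verified Lean document; each statement's English description precedes it below -/
import Mathlib

section
/- If X is an n×n Metzler matrix that is Hurwitz, then there exists a positive diagonal matrix Q such that Xᵀ Q + Q X is negative definite. -/
set_option maxHeartbeats 1000000

open Matrix Set Filter

noncomputable def matSpec {n : ℕ} (X : Matrix (Fin n) (Fin n) ℝ) : Set ℂ :=
  spectrum ℂ (X.map (Complex.ofReal))

def IsMetzler {n : ℕ} (X : Matrix (Fin n) (Fin n) ℝ) : Prop :=
  ∀ i j, i ≠ j → 0 ≤ X i j

def IsHurwitz {n : ℕ} (X : Matrix (Fin n) (Fin n) ℝ) : Prop :=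
  ∀ z ∈ matSpec X, z.re < 0

def MatIrreducible {n : ℕ} (X : Matrix (Fin n) (Fin n) ℝ) : Prop :=
  ∀ S : Finset (Fin n), S.Nonempty → S ≠ Finset.univ → ∃ i ∈ S, ∃ j ∉ S, X i j ≠ 0

noncomputable def spectralAbscissa {n : ℕ} (X : Matrix (Fin n) (Fin n) ℝ) : ℝ :=
  sSup (Complex.re '' matSpec X)

noncomputable def spectralRadiusR {n : ℕ} (X : Matrix (Fin n) (Fin n) ℝ) : ℝ :=
  sSup ((fun z => ‖z‖) '' matSpec X)

lemma sum_mulVec' {n m : ℕ} {ι : Type*} (s : Finset ι) (M : ι → Matrix (Fin n) (Fin m) ℂ)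
    (v : Fin m → ℂ) : (∑ j ∈ s, M j) *ᵥ v = ∑ j ∈ s, (M j) *ᵥ v := by
  induction s using Finset.cons_induction with
  | empty => simp [Matrix.zero_mulVec]
  | cons a s ha ih => simp [Finset.sum_cons, Matrix.add_mulVec, ih]

lemma aux_summable {n : ℕ} (A : Matrix (Fin n) (Fin n) ℂ)
    (h : ∀ μ ∈ spectrum ℂ A, ‖μ‖ < 1) (w : Fin n → ℂ) :
    Summable (fun k : ℕ => (A ^ k) *ᵥ w) := by
  let p : Submodule ℂ (Fin n → ℂ) :=
    { carrier := {v | Summable fun k : ℕ => (A ^ k) *ᵥ v}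
      add_mem' := by
        intro a b ha hb
        simpa [Matrix.mulVec_add] using ha.add hb
      zero_mem' := by
        simpa [Matrix.mulVec_zero] using (summable_zero : Summable (fun _ : ℕ => (0 : Fin n → ℂ)))
      smul_mem' := by
        intro c v hv
        simpa [Matrix.mulVec_smul] using hv.const_smul c }
  suffices hw : w ∈ p from hw
  set f : Module.End ℂ (Fin n → ℂ) := Matrix.toLinAlgEquiv' A with hf
  have htop := Module.End.iSup_maxGenEigenspace_eq_top f
  have hle : (⨆ μ : ℂ, f.maxGenEigenspace μ) ≤ p := by
    apply iSup_le
    intro μ v hv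
    rw [Module.End.mem_maxGenEigenspace] at hv
    obtain ⟨k, hk⟩ := hv
    rcases eq_or_ne v 0 with rfl | hv0
    · exact p.zero_mem
    have hkpos : k ≠ 0 := by
      rintro rfl
      rw [pow_zero, Module.End.one_apply] at hk
      exact hv0 hk
    have hμ : ‖μ‖ < 1 := by
      apply h
      have h1 : f.HasUnifEigenvalue μ (k : ℕ∞) := by
        rw [Module.End.HasUnifEigenvalue, Submodule.ne_bot_iff]
        refine ⟨v, ?_, hv0⟩
        rw [Module.End.mem_genEigenspace_nat]
        exact hk
      have h2 : f.HasUnifEigenvalue μ 1 :=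
        (Module.End.hasUnifEigenvalue_iff_hasUnifEigenvalue_one
          (by exact_mod_cast Nat.pos_of_ne_zero hkpos)).mp h1
      have h3 : μ ∈ spectrum ℂ f := h2.mem_spectrum
      rwa [AlgEquiv.spectrum_eq] at h3
    set N : Matrix (Fin n) (Fin n) ℂ := A - μ • 1 with hN
    have hNv : ∀ j, k ≤ j → (N ^ j) *ᵥ v = 0 := by
      intro j hj
      have hNk : (N ^ k) *ᵥ v = 0 := by
        have h4 : Matrix.toLinAlgEquiv' (N ^ k) v = 0 := by
          rw [map_pow]
          have h5 : Matrix.toLinAlgEquiv' N = f - μ • 1 := by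
            rw [hN, map_sub, _root_.map_smul, _root_.map_one]
          rw [h5]
          exact hk
        rwa [Matrix.toLinAlgEquiv'_apply] at h4
      have h6 : N ^ j = N ^ (j - k) * N ^ k := by
        rw [← pow_add]
        congr 1
        omega
      rw [h6, ← Matrix.mulVec_mulVec, hNk, Matrix.mulVec_zero]
    have hbinom : ∀ m : ℕ, k ≤ m →
        (A ^ m) *ᵥ v = ∑ j ∈ Finset.range k,
          ((m.choose j : ℂ) * μ ^ (m - j)) • ((N ^ j) *ᵥ v) := by
      intro m hm
      have hcomm : Commute N (μ • (1 : Matrix (Fin n) (Fin n) ℂ)) :=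
        Commute.smul_right (Commute.one_right N) μ
      have hA : A = N + μ • 1 := by rw [hN]; abel
      have hpow := hcomm.add_pow m
      rw [← hA] at hpow
      have expand : (A ^ m) *ᵥ v =
          ∑ j ∈ Finset.range (m + 1), ((m.choose j : ℂ) * μ ^ (m - j)) • ((N ^ j) *ᵥ v) := by
        rw [hpow, sum_mulVec']
        apply Finset.sum_congr rfl
        intro j _
        have hterm : N ^ j * (μ • (1 : Matrix (Fin n) (Fin n) ℂ)) ^ (m - j) * (m.choose j : Matrix (Fin n) (Fin n) ℂ)
            = ((m.choose j : ℂ) * μ ^ (m - j)) • N ^ j := by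
          rw [smul_pow, one_pow, mul_smul_comm, mul_one, smul_mul_assoc]
          have : (N ^ j) * ((m.choose j : ℕ) : Matrix (Fin n) (Fin n) ℂ) = (m.choose j : ℕ) • N ^ j := by
            rw [nsmul_eq_mul']
          rw [this, ← Nat.cast_smul_eq_nsmul ℂ, smul_smul, mul_comm]
        rw [hterm, Matrix.smul_mulVec]
      rw [expand]
      have hsub : Finset.range k ⊆ Finset.range (m + 1) := Finset.range_subset_range.mpr (by omega)
      refine (Finset.sum_subset hsub ?_).symm
      intro x _ hxk
      rw [Finset.mem_range, not_lt] at hxk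
      rw [hNv x hxk, smul_zero]
    -- summability estimate
    set r : ℝ := max ‖μ‖ (1/2) with hr
    have hr1 : r < 1 := max_lt hμ (by norm_num)
    have hr2 : (1:ℝ)/2 ≤ r := le_max_right _ _
    have hrpos : (0:ℝ) < r := lt_of_lt_of_le (by norm_num) hr2
    set C : ℝ := ∑ j ∈ Finset.range k, 2 ^ j * ‖(N ^ j) *ᵥ v‖ with hC
    have hbound : ∀ m, k ≤ m → ‖(A ^ m) *ᵥ v‖ ≤ (m:ℝ) ^ k * r ^ m * C := by
      intro m hm
      have hm1 : (1:ℝ) ≤ (m:ℝ) := by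
        have : 1 ≤ m := Nat.one_le_iff_ne_zero.mpr (by omega)
        exact_mod_cast this
      rw [hbinom m hm]
      refine le_trans (norm_sum_le _ _) ?_
      have hterm : ∀ j ∈ Finset.range k,
          ‖((m.choose j : ℂ) * μ ^ (m - j)) • ((N ^ j) *ᵥ v)‖
            ≤ ((m:ℝ) ^ k * r ^ m) * (2 ^ j * ‖(N ^ j) *ᵥ v‖) := by
        intro j hj
        rw [Finset.mem_range] at hj
        rw [norm_smul, norm_mul, norm_pow]
        have h1 : ‖(m.choose j : ℂ)‖ ≤ (m:ℝ) ^ k := by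
          rw [Complex.norm_natCast]
          calc ((m.choose j : ℕ) : ℝ) ≤ ((m ^ j : ℕ) : ℝ) := by
                exact_mod_cast Nat.choose_le_pow m j
            _ = (m:ℝ) ^ j := by push_cast; ring
            _ ≤ (m:ℝ) ^ k := pow_le_pow_right₀ hm1 (by omega)
        have h2 : ‖μ‖ ^ (m - j) ≤ r ^ m * 2 ^ j := by
          have hrj : (1:ℝ) ≤ r ^ j * 2 ^ j := by
            have h2r : (1:ℝ) ≤ 2 * r := by linarith
            calc (1:ℝ) = 1 ^ j := (one_pow j).symm
              _ ≤ (2 * r) ^ j := pow_le_pow_left₀ (by norm_num) h2r j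
              _ = r ^ j * 2 ^ j := by rw [mul_pow]; ring
          calc ‖μ‖ ^ (m - j) ≤ r ^ (m - j) :=
                pow_le_pow_left₀ (norm_nonneg _) (le_max_left _ _) _
            _ = r ^ (m - j) * 1 := (mul_one _).symm
            _ ≤ r ^ (m - j) * (r ^ j * 2 ^ j) := by
                exact mul_le_mul_of_nonneg_left hrj (by positivity)
            _ = r ^ m * 2 ^ j := by
                rw [← mul_assoc, ← pow_add]
                congr 2
                omega
        calc ‖(m.choose j : ℂ)‖ * ‖μ‖ ^ (m - j) * ‖(N ^ j) *ᵥ v‖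
            ≤ ((m:ℝ) ^ k) * (r ^ m * 2 ^ j) * ‖(N ^ j) *ᵥ v‖ := by
              apply mul_le_mul_of_nonneg_right _ (norm_nonneg _)
              exact mul_le_mul h1 h2 (by positivity) (by positivity)
          _ = ((m:ℝ) ^ k * r ^ m) * (2 ^ j * ‖(N ^ j) *ᵥ v‖) := by ring
      calc ∑ j ∈ Finset.range k, ‖((m.choose j : ℂ) * μ ^ (m - j)) • ((N ^ j) *ᵥ v)‖
          ≤ ∑ j ∈ Finset.range k, ((m:ℝ) ^ k * r ^ m) * (2 ^ j * ‖(N ^ j) *ᵥ v‖) :=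
            Finset.sum_le_sum hterm
        _ = (m:ℝ) ^ k * r ^ m * C := by rw [hC, ← Finset.mul_sum]
    have hgeom : Summable (fun m : ℕ => (m:ℝ) ^ k * r ^ m * C) :=
      Summable.mul_right C (summable_pow_mul_geometric_of_norm_lt_one k
        (by rwa [Real.norm_eq_abs, abs_of_pos hrpos]))
    have hsum : Summable (fun m : ℕ => (A ^ (m + k)) *ᵥ v) := by
      apply Summable.of_norm_bounded (g := fun m => ((m + k : ℕ):ℝ) ^ k * r ^ (m + k) * C)
      · exact (summable_nat_add_iff k).mpr hgeom
      · intro m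
        exact hbound (m + k) (by omega)
    exact (summable_nat_add_iff k).mp hsum
  exact hle (htop ▸ Submodule.mem_top)

lemma isMetzler_transpose {n : ℕ} {X : Matrix (Fin n) (Fin n) ℝ} (hM : IsMetzler X) :
    IsMetzler Xᵀ := fun i j hij => hM j i (Ne.symm hij)

lemma matSpec_transpose {n : ℕ} (X : Matrix (Fin n) (Fin n) ℝ) :
    matSpec Xᵀ = matSpec X := by
  unfold matSpec
  ext z
  rw [spectrum.mem_iff, spectrum.mem_iff]
  have hmap : (Xᵀ).map Complex.ofReal = (X.map Complex.ofReal)ᵀ := by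
    ext i j; simp [Matrix.map_apply]
  have key : algebraMap ℂ (Matrix (Fin n) (Fin n) ℂ) z - (Xᵀ).map Complex.ofReal
      = (algebraMap ℂ (Matrix (Fin n) (Fin n) ℂ) z - X.map Complex.ofReal)ᵀ := by
    rw [Matrix.transpose_sub, hmap]
    congr 1
    rw [Algebra.algebraMap_eq_smul_one, Matrix.transpose_smul, Matrix.transpose_one]
  rw [key]
  rw [Matrix.isUnit_iff_isUnit_det, Matrix.det_transpose, ← Matrix.isUnit_iff_isUnit_det]

lemma isHurwitz_transpose {n : ℕ} {X : Matrix (Fin n) (Fin n) ℝ} (hH : IsHurwitz X) :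
    IsHurwitz Xᵀ := by
  intro z hz
  exact hH z ((matSpec_transpose X) ▸ hz)

lemma exists_pos_mulVec_neg {n : ℕ} (X : Matrix (Fin n) (Fin n) ℝ)
    (hM : IsMetzler X) (hH : IsHurwitz X) :
    ∃ d : Fin n → ℝ, (∀ i, 0 < d i) ∧ ∀ i, (X *ᵥ d) i < 0 := by
  classical
  set Xc : Matrix (Fin n) (Fin n) ℂ := X.map (Complex.ofReal) with hXc
  -- the spectrum is finite
  have hfin : (matSpec X).Finite := Matrix.finite_spectrum Xc
  -- choose ε
  set g : ℂ → ℝ := fun z => -(2 * z.re) / Complex.normSq z with hg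
  have hgpos : ∀ z ∈ matSpec X, 0 < g z := by
    intro z hz
    have hre := hH z hz
    have hz0 : z ≠ 0 := by
      intro h0
      rw [h0] at hre
      simp at hre
    exact div_pos (by linarith) (Complex.normSq_pos.mpr hz0)
  set T : Finset ℝ :=
    insert 1 (hfin.toFinset.image g ∪ Finset.univ.image (fun i : Fin n => 1 / (1 + |X i i|)))
    with hT
  have hTne : T.Nonempty := ⟨1, Finset.mem_insert_self _ _⟩
  have hTpos : ∀ x ∈ T, 0 < x := by
    intro x hx
    rw [hT, Finset.mem_insert, Finset.mem_union] at hx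
    rcases hx with rfl | hx | hx
    · norm_num
    · obtain ⟨z, hz, rfl⟩ := Finset.mem_image.mp hx
      exact hgpos z (hfin.mem_toFinset.mp hz)
    · obtain ⟨i, _, rfl⟩ := Finset.mem_image.mp hx
      positivity
  set ε : ℝ := T.min' hTne / 2 with hε
  have hεpos : 0 < ε := by
    have := hTpos _ (T.min'_mem hTne)
    rw [hε]; linarith
  have hεlt : ∀ x ∈ T, ε < x := by
    intro x hx
    have h1 := T.min'_le x hx
    have h2 := hTpos _ (T.min'_mem hTne)
    rw [hε]; linarith
  have hεg : ∀ z ∈ matSpec X, ε < g z := by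
    intro z hz
    apply hεlt
    rw [hT, Finset.mem_insert, Finset.mem_union]
    right; left
    exact Finset.mem_image.mpr ⟨z, hfin.mem_toFinset.mpr hz, rfl⟩
  have hεd : ∀ i, 0 ≤ 1 + ε * X i i := by
    intro i
    have h1 : ε < 1 / (1 + |X i i|) := by
      apply hεlt
      rw [hT, Finset.mem_insert, Finset.mem_union]
      right; right
      exact Finset.mem_image.mpr ⟨i, Finset.mem_univ i, rfl⟩
    have h2 : 0 < 1 + |X i i| := by positivity
    have h3 : ε * (1 + |X i i|) < 1 := by
      rw [div_eq_mul_inv] at h1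
      calc ε * (1 + |X i i|) < 1 / (1 + |X i i|) * (1 + |X i i|) := by
            apply mul_lt_mul_of_pos_right h1 h2
        _ = 1 := by field_simp
    have h4 : -(ε * X i i) ≤ ε * |X i i| := by
      rw [← mul_neg]
      apply mul_le_mul_of_nonneg_left _ hεpos.le
      exact neg_le_abs _
    nlinarith [abs_nonneg (X i i)]
  -- the matrix B
  set B : Matrix (Fin n) (Fin n) ℝ := 1 + ε • X with hB
  have hBnn : ∀ i j, 0 ≤ B i j := by
    intro i j
    rw [hB, Matrix.add_apply, Matrix.smul_apply, Matrix.one_apply]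
    rcases eq_or_ne i j with rfl | hij
    · simpa using hεd i
    · simp only [if_neg hij, zero_add, smul_eq_mul]
      exact mul_nonneg hεpos.le (hM i j hij)
  set Bc : Matrix (Fin n) (Fin n) ℂ := B.map (Complex.ofReal) with hBc
  have hBcEq : Bc = 1 + (ε : ℂ) • Xc := by
    rw [hBc, hB, hXc]
    ext i j
    rcases eq_or_ne i j with rfl | hij
    · simp only [Matrix.map_apply, Matrix.add_apply, Matrix.smul_apply, Matrix.one_apply_eq,
        smul_eq_mul]
      push_cast
      ring
    · simp only [Matrix.map_apply, Matrix.add_apply, Matrix.smul_apply, Matrix.one_apply_ne hij,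
        smul_eq_mul]
      push_cast
      ring
  -- spectrum bound for Bc
  have hspec : ∀ μ ∈ spectrum ℂ Bc, ‖μ‖ < 1 := by
    intro μ hμ
    have hεne : (ε : ℂ) ≠ 0 := by exact_mod_cast hεpos.ne'
    set lam : ℂ := (μ - 1) / ε with hlam
    have hlspec : lam ∈ matSpec X := by
      rw [spectrum.mem_iff] at hμ
      show lam ∈ spectrum ℂ Xc
      rw [spectrum.mem_iff]
      intro hu
      apply hμ
      have helam : (ε : ℂ) * lam = μ - 1 := by
        rw [hlam]; field_simp
      have key : algebraMap ℂ (Matrix (Fin n) (Fin n) ℂ) μ - Bc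
          = algebraMap ℂ (Matrix (Fin n) (Fin n) ℂ) (ε : ℂ)
            * (algebraMap ℂ (Matrix (Fin n) (Fin n) ℂ) lam - Xc) := by
        rw [hBcEq, mul_sub, ← _root_.map_mul, helam, ← Algebra.smul_def, map_sub, _root_.map_one]
        abel
      rw [key]
      exact IsUnit.mul ((isUnit_iff_ne_zero.mpr hεne).map _) hu
    have hμeq : μ = 1 + (ε : ℂ) * lam := by
      rw [hlam]; field_simp; ring
    have hgl := hεg lam hlspec
    have hre := hH lam hlspec
    have hns : 0 < Complex.normSq lam := Complex.normSq_pos.mpr (by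
      intro h0; rw [h0] at hre; simp at hre)
    have hgl' : ε * Complex.normSq lam < -(2 * lam.re) := by
      rw [hg] at hgl
      calc ε * Complex.normSq lam < (-(2 * lam.re) / Complex.normSq lam) * Complex.normSq lam :=
            mul_lt_mul_of_pos_right hgl hns
        _ = -(2 * lam.re) := by field_simp
    have hnsμ : Complex.normSq μ < 1 := by
      rw [hμeq]
      have : Complex.normSq (1 + (ε : ℂ) * lam)
          = 1 + 2 * ε * lam.re + ε ^ 2 * Complex.normSq lam := by
        simp [Complex.normSq_apply, Complex.add_re, Complex.add_im, Complex.mul_re,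
          Complex.mul_im, Complex.ofReal_re, Complex.ofReal_im, Complex.normSq_apply]
        ring
      rw [this]
      nlinarith
    have : ‖μ‖ ^ 2 < 1 := by
      rw [← Complex.sq_norm μ] at hnsμ
      simpa using hnsμ
    nlinarith [norm_nonneg μ]
  -- summability
  have hsumC : Summable (fun k : ℕ => (Bc ^ k) *ᵥ (fun _ => (1 : ℂ))) :=
    aux_summable Bc hspec _
  have hentry : ∀ (k : ℕ) (i : Fin n),
      ((Bc ^ k) *ᵥ (fun _ => (1 : ℂ))) i = (((B ^ k) *ᵥ (fun _ => (1 : ℝ))) i : ℂ) := by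
    intro k i
    have hpow : Bc ^ k = (B ^ k).map (Complex.ofReal) := by
      rw [hBc]
      have : B.map (Complex.ofReal) = Complex.ofRealHom.mapMatrix B := rfl
      rw [this, ← map_pow]
      rfl
    rw [hpow]
    simp [Matrix.mulVec, dotProduct, Matrix.map_apply]
  have hcomp : ∀ i, Summable (fun k : ℕ => ((B ^ k) *ᵥ (fun _ => (1 : ℝ))) i) := by
    intro i
    apply Complex.summable_ofReal.mp
    have h1 : Summable (fun k : ℕ => ((Bc ^ k) *ᵥ (fun _ => (1 : ℂ))) i) := by
      have := Pi.summable.mp hsumC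
      exact this i
    convert h1 using 2 with k
    exact (hentry k i).symm
  have hsumR : Summable (fun k : ℕ => (B ^ k) *ᵥ (fun _ => (1 : ℝ))) :=
    Pi.summable.mpr hcomp
  set u : ℕ → Fin n → ℝ := fun k => (B ^ k) *ᵥ (fun _ => (1 : ℝ)) with hu
  set d : Fin n → ℝ := ∑' k, u k with hd
  -- entrywise nonnegativity of powers
  have hpow_nn : ∀ (k : ℕ) (i j : Fin n), 0 ≤ (B ^ k) i j := by
    intro k
    induction k with
    | zero => intro i j; rw [pow_zero, Matrix.one_apply]; split <;> norm_num
    | succ m ih =>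
      intro i j
      rw [pow_succ, Matrix.mul_apply]
      exact Finset.sum_nonneg fun l _ => mul_nonneg (ih i l) (hBnn l j)
  have hu_nn : ∀ k i, 0 ≤ u k i := by
    intro k i
    rw [hu]
    simp only [Matrix.mulVec, dotProduct, mul_one]
    exact Finset.sum_nonneg fun j _ => by simpa using hpow_nn k i j
  have hu0 : ∀ i, u 0 i = 1 := by
    intro i
    have : u 0 = (fun _ => (1:ℝ)) := by
      rw [hu]
      simp only [pow_zero, Matrix.one_mulVec]
    rw [this]
  have hdpos : ∀ i, 0 < d i := by
    intro i
    have happ : d i = ∑' k, u k i := tsum_apply hsumR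
    have h1 : u 0 i ≤ ∑' k, u k i := Summable.le_tsum (hcomp i) 0 (fun k _ => hu_nn k i)
    rw [happ]
    rw [hu0 i] at h1
    linarith
  -- the matrix identity
  have hmulv : ∀ (M : Matrix (Fin n) (Fin n) ℝ), M *ᵥ d = ∑' k, M *ᵥ u k := by
    intro M
    let L : (Fin n → ℝ) →L[ℝ] (Fin n → ℝ) := LinearMap.toContinuousLinearMap (Matrix.mulVecLin M)
    have h1 : M *ᵥ d = L d := rfl
    have h2 : ∀ k, M *ᵥ u k = L (u k) := fun k => rfl
    rw [h1, hd, L.map_tsum hsumR]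
    exact tsum_congr fun k => (h2 k).symm
  have hBu : ∀ k, B *ᵥ u k = u (k + 1) := by
    intro k
    rw [hu]
    simp only
    rw [Matrix.mulVec_mulVec, ← pow_succ']
  have htel : B *ᵥ d = d - u 0 := by
    rw [hmulv B]
    have h1 : ∑' k, B *ᵥ u k = ∑' k, u (k + 1) := tsum_congr fun k => hBu k
    rw [h1]
    have h2 : ∑' k, u k = u 0 + ∑' k, u (k + 1) := Summable.tsum_eq_zero_add hsumR
    rw [hd, h2]
    abel
  have hXd : ∀ i, (X *ᵥ d) i = -(1 / ε) := by
    intro i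
    have hεX : ε • X = B - 1 := by rw [hB]; abel
    have h1 : (ε • X) *ᵥ d = B *ᵥ d - d := by
      rw [hεX, Matrix.sub_mulVec, Matrix.one_mulVec]
    rw [htel] at h1
    have h2 : (ε • X) *ᵥ d = -u 0 := by rw [h1]; abel
    have h3 : ε • (X *ᵥ d) = -u 0 := by
      rw [← h2, Matrix.smul_mulVec]
    have h4 : ε * (X *ᵥ d) i = -1 := by
      have := congrFun h3 i
      simpa [hu0 i] using this
    field_simp
    linarith
  exact ⟨d, hdpos, fun i => by rw [hXd i]; exact neg_lt_zero.mpr (by positivity)⟩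

theorem stmt1 {n : ℕ} (X : Matrix (Fin n) (Fin n) ℝ) (hM : IsMetzler X)
    (hH : IsHurwitz X) :
    ∃ q : Fin n → ℝ, (∀ i, 0 < q i) ∧
      ∀ v : Fin n → ℝ, v ≠ 0 →
        v ⬝ᵥ ((Xᵀ * Matrix.diagonal q + Matrix.diagonal q * X) *ᵥ v) < 0 := by
  obtain ⟨d, hd, hXd⟩ := exists_pos_mulVec_neg X hM hH
  obtain ⟨e, he, hXe⟩ := exists_pos_mulVec_neg Xᵀ (isMetzler_transpose hM) (isHurwitz_transpose hH)
  set q : Fin n → ℝ := fun i => e i / d i with hq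
  have hqpos : ∀ i, 0 < q i := fun i => div_pos (he i) (hd i)
  refine ⟨q, hqpos, ?_⟩
  intro v hv
  set K : Matrix (Fin n) (Fin n) ℝ := Xᵀ * Matrix.diagonal q + Matrix.diagonal q * X with hK
  have hKentry : ∀ i j, K i j = X j i * q j + q i * X i j := by
    intro i j
    rw [hK, Matrix.add_apply, Matrix.mul_diagonal, Matrix.diagonal_mul, Matrix.transpose_apply]
  have hKsymm : ∀ i j, K i j = K j i := by
    intro i j
    rw [hKentry, hKentry]
    ring
  have hKoff : ∀ i j, i ≠ j → 0 ≤ K i j := by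
    intro i j hij
    rw [hKentry]
    have h1 := hM i j hij
    have h2 := hM j i (Ne.symm hij)
    have := hqpos i
    have := hqpos j
    positivity
  have hKd : ∀ i, (K *ᵥ d) i < 0 := by
    intro i
    have hexp : (K *ᵥ d) i = (Xᵀ *ᵥ e) i + q i * (X *ᵥ d) i := by
      simp only [Matrix.mulVec, dotProduct]
      rw [Finset.mul_sum]
      rw [← Finset.sum_add_distrib]
      apply Finset.sum_congr rfl
      intro j _
      rw [hKentry]
      have hqd : q j * d j = e j := by
        show e j / d j * d j = e j
        exact div_mul_cancel₀ (e j) (hd j).ne'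
      rw [Matrix.transpose_apply]
      calc (X j i * q j + q i * X i j) * d j
          = X j i * (q j * d j) + q i * (X i j * d j) := by ring
        _ = X j i * e j + q i * (X i j * d j) := by rw [hqd]
    rw [hexp]
    have h1 := hXe i
    have h2 := hXd i
    have h3 := hqpos i
    nlinarith
  -- quadratic form argument
  have expand : v ⬝ᵥ (K *ᵥ v) = ∑ i, ∑ j, v i * K i j * v j := by
    simp only [dotProduct, Matrix.mulVec, Finset.mul_sum]
    apply Finset.sum_congr rfl
    intro i _
    apply Finset.sum_congr rfl
    intro j _
    ring
  have keybound : ∀ i j, v i * K i j * v j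
      ≤ K i j * (d j * v i ^ 2 / (2 * d i) + d i * v j ^ 2 / (2 * d j)) := by
    intro i j
    rcases eq_or_ne i j with rfl | hij
    · have hdi := (hd i).ne'
      have heq : d i * v i ^ 2 / (2 * d i) + d i * v i ^ 2 / (2 * d i) = v i ^ 2 := by
        field_simp
        ring
      rw [heq]
      apply le_of_eq
      ring
    · have hK0 := hKoff i j hij
      have hvv : v i * v j ≤ d j * v i ^ 2 / (2 * d i) + d i * v j ^ 2 / (2 * d j) := by
        have h1 := sq_nonneg (d j * v i - d i * v j)
        have h2 := hd i
        have h3 := hd j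
        have h4 : 0 < d i * d j := mul_pos h2 h3
        rw [div_add_div _ _ (by positivity) (by positivity), le_div_iff₀ (by positivity)]
        nlinarith
      calc v i * K i j * v j = K i j * (v i * v j) := by ring
        _ ≤ K i j * (d j * v i ^ 2 / (2 * d i) + d i * v j ^ 2 / (2 * d j)) :=
            mul_le_mul_of_nonneg_left hvv hK0
  have step2 : ∑ i, ∑ j, K i j * (d j * v i ^ 2 / (2 * d i) + d i * v j ^ 2 / (2 * d j))
      = ∑ i, (v i ^ 2 / d i) * (K *ᵥ d) i := by
    have hsplit : ∀ i j, K i j * (d j * v i ^ 2 / (2 * d i) + d i * v j ^ 2 / (2 * d j))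
        = K i j * (d j * v i ^ 2 / (2 * d i)) + K i j * (d i * v j ^ 2 / (2 * d j)) := by
      intro i j; ring
    simp_rw [hsplit]
    have hsplit2 : (∑ i, ∑ j, (K i j * (d j * v i ^ 2 / (2 * d i)) + K i j * (d i * v j ^ 2 / (2 * d j))))
        = (∑ i, ∑ j, K i j * (d j * v i ^ 2 / (2 * d i)))
          + (∑ i, ∑ j, K i j * (d i * v j ^ 2 / (2 * d j))) := by
      rw [← Finset.sum_add_distrib]
      exact Finset.sum_congr rfl fun i _ => by rw [← Finset.sum_add_distrib]
    rw [hsplit2]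
    have hswap : ∑ i, ∑ j, K i j * (d i * v j ^ 2 / (2 * d j))
        = ∑ i, ∑ j, K i j * (d j * v i ^ 2 / (2 * d i)) := by
      rw [Finset.sum_comm]
      apply Finset.sum_congr rfl
      intro i _
      apply Finset.sum_congr rfl
      intro j _
      rw [hKsymm j i]
    rw [hswap, ← two_mul, Finset.mul_sum]
    apply Finset.sum_congr rfl
    intro i _
    have hKdi : (K *ᵥ d) i = ∑ j, K i j * d j := by
      simp [Matrix.mulVec, dotProduct]
    rw [hKdi, Finset.mul_sum, Finset.mul_sum]
    apply Finset.sum_congr rfl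
    intro j _
    have hdi := (hd i).ne'
    field_simp
  obtain ⟨i0, hi0⟩ : ∃ i, v i ≠ 0 := by
    by_contra h
    push_neg at h
    exact hv (funext h)
  have hsum_lt : ∑ i, (v i ^ 2 / d i) * (K *ᵥ d) i < 0 := by
    have hzero : (0:ℝ) = ∑ _i : Fin n, (0:ℝ) := by simp
    calc ∑ i, (v i ^ 2 / d i) * (K *ᵥ d) i < ∑ _i : Fin n, (0:ℝ) := by
          apply Finset.sum_lt_sum
          · intro i _
            apply mul_nonpos_of_nonneg_of_nonpos
            · exact div_nonneg (sq_nonneg _) (hd i).le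
            · exact (hKd i).le
          · refine ⟨i0, Finset.mem_univ i0, ?_⟩
            apply mul_neg_of_pos_of_neg
            · apply div_pos _ (hd i0)
              exact lt_of_le_of_ne (sq_nonneg _) (Ne.symm (pow_ne_zero 2 hi0))
            · exact hKd i0
      _ = 0 := by simp
  have hle : v ⬝ᵥ (K *ᵥ v) ≤ ∑ i, (v i ^ 2 / d i) * (K *ᵥ d) i := by
    rw [expand, ← step2]
    exact Finset.sum_le_sum fun i _ => Finset.sum_le_sum fun j _ => keybound i j
  exact lt_of_le_of_lt hle hsum_lt
end

section
/- Let X be an n×n irreducible Metzler matrix and suppose there exists a strictly positive vector v with Xv ≺ 0 (i.e., Xv ⪯ 0 componentwise and Xv ≠ 0). Then the spectral abscissa of X is strictly negative, i.e., X is Hurwitz. -/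
open Matrix Set Filter

theorem stmt5 {n : ℕ} (X : Matrix (Fin n) (Fin n) ℝ) (hM : IsMetzler X)
    (hI : MatIrreducible X) (v : Fin n → ℝ) (hv : ∀ i, 0 < v i)
    (hXv1 : ∀ i, (X *ᵥ v) i ≤ 0) (hXv2 : X *ᵥ v ≠ 0) :
    IsHurwitz X := by
  classical
  intro z hz
  by_contra hre
  push_neg at hre
  -- extract eigenvector
  set A : Matrix (Fin n) (Fin n) ℂ := X.map Complex.ofReal with hA
  rw [matSpec, spectrum.mem_iff] at hz
  have hdet : (algebraMap ℂ (Matrix (Fin n) (Fin n) ℂ) z - A).det = 0 := by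
    by_contra h
    exact hz ((Matrix.isUnit_iff_isUnit_det _).mpr (isUnit_iff_ne_zero.mpr h))
  obtain ⟨w, hw0, hw⟩ := Matrix.exists_mulVec_eq_zero_iff.mpr hdet
  rw [Matrix.sub_mulVec, sub_eq_zero] at hw
  have heig : ∀ i, ∑ j, (X i j : ℂ) * w j = z * w i := by
    intro i
    have := congrFun hw i
    rw [Algebra.algebraMap_eq_smul_one, Matrix.smul_mulVec, Matrix.one_mulVec] at this
    simpa [Matrix.mulVec, dotProduct, hA, Matrix.map_apply, mul_comm] using this.symm
  set u : Fin n → ℝ := fun i => ‖w i‖ with hu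
  -- maximizer of u i / v i
  obtain ⟨i₀, hi₀⟩ : ∃ i, w i ≠ 0 := by
    by_contra h; push_neg at h; exact hw0 (funext h)
  have hne : (Finset.univ : Finset (Fin n)).Nonempty := ⟨i₀, Finset.mem_univ _⟩
  obtain ⟨im, -, him⟩ := Finset.exists_max_image Finset.univ (fun i => u i / v i) hne
  set c : ℝ := u im / v im with hc
  have hc0 : 0 < c := by
    have h1 : 0 < u i₀ / v i₀ := div_pos (norm_pos_iff.mpr hi₀) (hv i₀)
    exact lt_of_lt_of_le h1 (him i₀ (Finset.mem_univ _))
  have hle : ∀ k, u k ≤ c * v k := by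
    intro k
    have := him k (Finset.mem_univ _)
    rw [div_le_iff₀ (hv k)] at this
    linarith [this]
  -- key lemma at any index where u i = c * v i
  have key : ∀ i, u i = c * v i →
      (X *ᵥ v) i = 0 ∧ ∀ j, j ≠ i → X i j ≠ 0 → u j = c * v j := by
    intro i hui
    have hsplit : (z - (X i i : ℂ)) * w i = ∑ j ∈ Finset.univ.erase i, (X i j : ℂ) * w j := by
      have := heig i
      rw [← Finset.add_sum_erase _ _ (Finset.mem_univ i)] at this
      rw [sub_mul]
      linear_combination -this
    have h2 : ‖(z - (X i i : ℂ)) * w i‖ ≤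
        ∑ j ∈ Finset.univ.erase i, X i j * u j := by
      rw [hsplit]
      refine le_trans (norm_sum_le _ _) (le_of_eq ?_)
      apply Finset.sum_congr rfl
      intro j hj
      rw [norm_mul, Complex.norm_real, Real.norm_eq_abs, abs_of_nonneg (hM i j (Finset.ne_of_mem_erase hj).symm)]
    have hptle : ∀ j ∈ Finset.univ.erase i, X i j * u j ≤ X i j * (c * v j) := by
      intro j hj
      exact mul_le_mul_of_nonneg_left (hle j) (hM i j (Finset.ne_of_mem_erase hj).symm)
    have h3 : ∑ j ∈ Finset.univ.erase i, X i j * u j ≤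
        ∑ j ∈ Finset.univ.erase i, X i j * (c * v j) := Finset.sum_le_sum hptle
    have h4 : ∑ j ∈ Finset.univ.erase i, X i j * (c * v j)
        = c * ((X *ᵥ v) i - X i i * v i) := by
      have hmv : (X *ᵥ v) i = X i i * v i + ∑ j ∈ Finset.univ.erase i, X i j * v j := by
        rw [Matrix.mulVec, dotProduct, ← Finset.add_sum_erase _ _ (Finset.mem_univ i)]
      rw [hmv, add_sub_cancel_left, Finset.mul_sum]
      exact Finset.sum_congr rfl (fun j _ => by ring)
    have h5 : c * ((X *ᵥ v) i - X i i * v i) ≤ -X i i * (c * v i) := by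
      have := mul_nonpos_of_nonneg_of_nonpos hc0.le (hXv1 i)
      nlinarith
    have h6 : -X i i * (c * v i) ≤ ‖(z - (X i i : ℂ)) * w i‖ := by
      rw [norm_mul]
      have h7 : -X i i ≤ ‖z - (X i i : ℂ)‖ := by
        have := Complex.re_le_norm (z - (X i i : ℂ))
        simp only [Complex.sub_re, Complex.ofReal_re] at this
        linarith
      have h8 : ‖w i‖ = c * v i := hui
      rw [h8]
      have : (0:ℝ) ≤ c * v i := mul_nonneg hc0.le (hv i).le
      nlinarith
    have heq34 : ∑ j ∈ Finset.univ.erase i, X i j * u j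
        = ∑ j ∈ Finset.univ.erase i, X i j * (c * v j) := by
      linarith [h2, h3, h5, h6, h4]
    have heq45 : c * ((X *ᵥ v) i - X i i * v i) = -X i i * (c * v i) := by
      linarith [h2, h3, h5, h6, h4]
    constructor
    · have : c * (X *ᵥ v) i = 0 := by linarith [heq45]
      exact (mul_eq_zero.mp this).resolve_left (ne_of_gt hc0)
    · intro j hji hXij
      have := (Finset.sum_eq_sum_iff_of_le hptle).mp heq34 j
        (Finset.mem_erase.mpr ⟨hji, Finset.mem_univ j⟩)
      exact mul_left_cancel₀ hXij this
  -- the set of maximizers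
  set S : Finset (Fin n) := Finset.univ.filter (fun i => u i = c * v i) with hS
  have himS : im ∈ S := by
    simp only [hS, Finset.mem_filter, Finset.mem_univ, true_and]
    rw [hc, div_mul_cancel₀ _ (hv im).ne']
  by_cases hSu : S = Finset.univ
  · apply hXv2
    funext i
    have hiS : i ∈ S := hSu ▸ Finset.mem_univ i
    have := (Finset.mem_filter.mp hiS).2
    exact (key i this).1
  · obtain ⟨i, hiS, j, hjS, hXij⟩ := hI S ⟨im, himS⟩ hSu
    have hji : j ≠ i := fun h => hjS (h ▸ hiS)
    have := (key i (Finset.mem_filter.mp hiS).2).2 j hji hXij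
    exact hjS (Finset.mem_filter.mpr ⟨Finset.mem_univ j, this⟩)
end

section
/- Let X ∈ ℝ^{n×n} be nonnegative and y ∈ ℝⁿ with 0 ⪯ y ≪ 1. Define T_i(p) = ((Xp)_i + y_i)/(1 + (Xp)_i) on [0,1]ⁿ. If T has a fixed point with all components strictly positive, then T has at most one such strictly positive fixed point. -/
open Matrix Set Filter

lemma aux_le {n : ℕ} (X : Matrix (Fin n) (Fin n) ℝ) (hX : ∀ i j, 0 ≤ X i j)
    (y : Fin n → ℝ) (hy : ∀ i, 0 ≤ y i ∧ y i < 1)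
    (p q : Fin n → ℝ)
    (hp : ∀ i, 0 < p i ∧ p i ≤ 1) (hq : ∀ i, 0 < q i ∧ q i ≤ 1)
    (hfp : ∀ i, ((X *ᵥ p) i + y i) / (1 + (X *ᵥ p) i) = p i)
    (hfq : ∀ i, ((X *ᵥ q) i + y i) / (1 + (X *ᵥ q) i) = q i) :
    ∀ i, p i ≤ q i := by
  intro i
  obtain ⟨i0, -, hmax⟩ := Finset.exists_max_image Finset.univ (fun j => p j / q j)
    ⟨i, Finset.mem_univ i⟩
  set η := p i0 / q i0 with hηdef
  have hη : ∀ j, p j ≤ η * q j := by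
    intro j
    have := hmax j (Finset.mem_univ j)
    exact (div_le_iff₀ (hq j).1).mp this
  by_cases hη1 : η ≤ 1
  · calc p i ≤ η * q i := hη i
      _ ≤ 1 * q i := by nlinarith [(hq i).1]
      _ = q i := one_mul _
  · exfalso
    push_neg at hη1
    set s := (X *ᵥ p) i0 with hs
    set t := (X *ᵥ q) i0 with ht
    have hseq : s = ∑ j, X i0 j * p j := by rw [hs]; simp [mulVec, dotProduct]
    have hteq : t = ∑ j, X i0 j * q j := by rw [ht]; simp [mulVec, dotProduct]
    have hs0 : 0 ≤ s := by
      rw [hseq]; exact Finset.sum_nonneg fun j _ => mul_nonneg (hX i0 j) (hp j).1.le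
    have ht0 : 0 ≤ t := by
      rw [hteq]; exact Finset.sum_nonneg fun j _ => mul_nonneg (hX i0 j) (hq j).1.le
    have hst : s ≤ η * t := by
      rw [hseq, hteq, Finset.mul_sum]
      apply Finset.sum_le_sum
      intro j _
      calc X i0 j * p j ≤ X i0 j * (η * q j) :=
            mul_le_mul_of_nonneg_left (hη j) (hX i0 j)
        _ = η * (X i0 j * q j) := by ring
    have h1s : (0:ℝ) < 1 + s := by linarith
    have h1t : (0:ℝ) < 1 + t := by linarith
    have ep : p i0 * (1 + s) = s + y i0 := by
      have := hfp i0
      rw [← hs, div_eq_iff h1s.ne'] at this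
      linarith [this]
    have eq : q i0 * (1 + t) = t + y i0 := by
      have := hfq i0
      rw [← ht, div_eq_iff h1t.ne'] at this
      linarith [this]
    have hpi0 : p i0 = η * q i0 := (div_mul_cancel₀ _ (hq i0).1.ne').symm
    have hy0 := (hy i0).1
    have hy1 := (hy i0).2
    have hq0 := (hq i0).1
    have k1 : (s + y i0) * (1 + η * t) ≤ (η * t + y i0) * (1 + s) := by
      nlinarith [mul_nonneg (sub_nonneg.2 hy1.le) (sub_nonneg.2 hst)]
    have k2 : η * q i0 * (1 + η * t) ≤ η * t + y i0 := by
      have h2 : (η * q i0 * (1 + η * t)) * (1 + s) ≤ (η * t + y i0) * (1 + s) := by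
        calc (η * q i0 * (1 + η * t)) * (1 + s) = (s + y i0) * (1 + η * t) := by
              rw [← hpi0, ← ep]; ring
          _ ≤ (η * t + y i0) * (1 + s) := k1
      exact le_of_mul_le_mul_right h2 h1s
    have k3 : η * (t + y i0) * (1 + η * t) ≤ (η * t + y i0) * (1 + t) := by
      calc η * (t + y i0) * (1 + η * t) = (η * q i0 * (1 + η * t)) * (1 + t) := by
            rw [← eq]; ring
        _ ≤ (η * t + y i0) * (1 + t) := mul_le_mul_of_nonneg_right k2 h1t.le
    have hb : y i0 + η * t ^ 2 + t * y i0 * (η + 1) ≤ 0 := by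
      by_contra hc
      push_neg at hc
      nlinarith [mul_pos (sub_pos.2 hη1) hc, k3]
    have hηpos : (0:ℝ) < η := lt_trans one_pos hη1
    have ht' : t = 0 := by nlinarith [sq_nonneg t, mul_nonneg (mul_nonneg ht0 hy0) (by linarith : (0:ℝ) ≤ η + 1), mul_nonneg hηpos.le (sq_nonneg t)]
    have hy' : y i0 = 0 := by nlinarith [mul_nonneg hηpos.le (sq_nonneg t), mul_nonneg (mul_nonneg ht0 hy0) (by linarith : (0:ℝ) ≤ η + 1)]
    rw [ht', hy'] at eq
    simp at eq
    linarith


theorem stmt7 {n : ℕ} (X : Matrix (Fin n) (Fin n) ℝ) (hX : ∀ i j, 0 ≤ X i j)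
    (y : Fin n → ℝ) (hy : ∀ i, 0 ≤ y i ∧ y i < 1)
    (p q : Fin n → ℝ)
    (hp : ∀ i, 0 < p i ∧ p i ≤ 1) (hq : ∀ i, 0 < q i ∧ q i ≤ 1)
    (hfp : ∀ i, ((X *ᵥ p) i + y i) / (1 + (X *ᵥ p) i) = p i)
    (hfq : ∀ i, ((X *ᵥ q) i + y i) / (1 + (X *ᵥ q) i) = q i) :
    p = q := by
  funext i
  exact le_antisymm (aux_le X hX y hy p q hp hq hfp hfq i)
    (aux_le X hX y hy q p hq hp hfq hfp i)
end

section
/- Consider the SIS dynamics ṗ = (AᵀB − D)p − diag(p) AᵀB p on ℝⁿ, where A has nonnegative entries and B, D are positive diagonal matrices. If p(0) ∈ [0,1]ⁿ, then p(t) ∈ [0,1]ⁿ for all t ≥ 0, i.e., the cube [0,1]ⁿ is forward invariant. -/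
open Matrix Set Filter

/-- Right derivative of the positive part of a differentiable function. -/
lemma posPart_hasDerivWithinAt {g : ℝ → ℝ} {g' : ℝ} {t : ℝ} (hg : HasDerivAt g g' t) :
    HasDerivWithinAt (fun s => max (g s) 0)
      (if 0 < g t then g' else if g t < 0 then 0 else max g' 0) (Ici t) t := by
  rcases lt_trichotomy (g t) 0 with h | h | h
  · rw [if_neg (by linarith), if_pos h]
    have hev : (fun s => max (g s) 0) =ᶠ[nhds t] (fun _ => (0:ℝ)) := by
      filter_upwards [hg.continuousAt.eventually_lt_const h] with s hs
      exact max_eq_right hs.le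
    exact ((hasDerivAt_const t (0:ℝ)).congr_of_eventuallyEq hev).hasDerivWithinAt
  · rw [if_neg (by simp [h]), if_neg (by simp [h])]
    have H := (hg.hasDerivWithinAt (s := Ici t))
    rw [hasDerivWithinAt_iff_isLittleO] at H ⊢
    have hO : (fun s => max (g s) 0 - max (g t) 0 - (s - t) • max g' 0)
        =O[nhdsWithin t (Ici t)] (fun s => g s - g t - (s - t) • g') := by
      rw [Asymptotics.isBigO_iff]
      refine ⟨1, ?_⟩
      filter_upwards [self_mem_nhdsWithin] with s hs
      have h1 : (s - t) • max g' 0 = max ((s - t) * g') 0 := by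
        rw [smul_eq_mul, mul_max_of_nonneg _ _ (sub_nonneg.2 hs), mul_zero]
      rw [h, h1, one_mul, smul_eq_mul]
      simp only [max_self, sub_zero, Real.norm_eq_abs]
      exact abs_max_sub_max_le_abs _ _ _
    exact hO.trans_isLittleO H
  · rw [if_pos h]
    have hev : (fun s => max (g s) 0) =ᶠ[nhds t] g := by
      filter_upwards [hg.continuousAt.eventually_const_lt h] with s hs
      exact max_eq_left hs.le
    exact (hg.congr_of_eventuallyEq hev).hasDerivWithinAt

theorem stmt9 {n : ℕ} (A : Matrix (Fin n) (Fin n) ℝ) (hA : ∀ i j, 0 ≤ A i j)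
    (β δ : Fin n → ℝ) (hβ : ∀ i, 0 < β i) (hδ : ∀ i, 0 < δ i)
    (p : ℝ → Fin n → ℝ)
    (hode : ∀ i t, HasDerivAt (fun s => p s i)
      (-(δ i) * p t i +
        (1 - p t i) * ∑ j ∈ Finset.univ.filter (fun j => j ≠ i), A j i * β j * p t j) t)
    (h0 : ∀ i, p 0 i ∈ Set.Icc (0:ℝ) 1) :
    ∀ t ≥ (0:ℝ), ∀ i, p t i ∈ Set.Icc (0:ℝ) 1 := by
  classical
  set F : ℝ → Fin n → ℝ := fun t i =>
    -(δ i) * p t i +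
      (1 - p t i) * ∑ j ∈ Finset.univ.filter (fun j => j ≠ i), A j i * β j * p t j with hF
  set N : ℝ → Fin n → ℝ := fun t i => max (-(p t i)) 0 with hNdef
  set E : ℝ → Fin n → ℝ := fun t i => max (p t i - 1) 0 with hEdef
  set u : ℝ → ℝ := fun t => ∑ i, (N t i + E t i) with hudef
  have hNnn : ∀ t i, 0 ≤ N t i := fun t i => le_max_right _ _
  have hEnn : ∀ t i, 0 ≤ E t i := fun t i => le_max_right _ _
  have hunn : ∀ t, 0 ≤ u t := fun t =>
    Finset.sum_nonneg fun i _ => add_nonneg (hNnn t i) (hEnn t i)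
  have hNle : ∀ t i, N t i ≤ u t := fun t i =>
    le_trans (le_add_of_nonneg_right (hEnn t i))
      (Finset.single_le_sum (f := fun j => N t j + E t j)
        (fun j _ => add_nonneg (hNnn t j) (hEnn t j)) (Finset.mem_univ i))
  have hEle : ∀ t i, E t i ≤ u t := fun t i =>
    le_trans (le_add_of_nonneg_left (hNnn t i))
      (Finset.single_le_sum (f := fun j => N t j + E t j)
        (fun j _ => add_nonneg (hNnn t j) (hEnn t j)) (Finset.mem_univ i))
  have hpcont : ∀ i, Continuous (fun s => p s i) := fun i =>
    continuous_iff_continuousAt.2 fun t => (hode i t).continuousAt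
  have hucont : Continuous u := by
    apply continuous_finset_sum
    intro i _
    exact ((hpcont i).neg.max continuous_const).add
      (((hpcont i).sub continuous_const).max continuous_const)
  set dN : ℝ → Fin n → ℝ := fun t i =>
    if 0 < -(p t i) then -(F t i) else if -(p t i) < 0 then 0 else max (-(F t i)) 0 with hdN
  set dE : ℝ → Fin n → ℝ := fun t i =>
    if 0 < p t i - 1 then F t i else if p t i - 1 < 0 then 0 else max (F t i) 0 with hdE
  have hNder : ∀ t i, HasDerivWithinAt (fun s => N s i) (dN t i) (Ici t) t := fun t i =>
    posPart_hasDerivWithinAt ((hode i t).neg)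
  have hEder : ∀ t i, HasDerivWithinAt (fun s => E s i) (dE t i) (Ici t) t := fun t i =>
    posPart_hasDerivWithinAt ((hode i t).sub_const 1)
  set U : ℝ → ℝ := fun t => ∑ i, (dN t i + dE t i) with hU
  have huder : ∀ t, HasDerivWithinAt u (U t) (Ici t) t := fun t =>
    HasDerivWithinAt.fun_sum fun i _ => (hNder t i).add (hEder t i)
  set C : ℝ := (∑ i, ∑ j, A j i * β j) + 1 with hC
  have hCpos : 0 < C := by
    have h1 : 0 ≤ ∑ i, ∑ j, A j i * β j :=
      Finset.sum_nonneg fun i _ => Finset.sum_nonneg fun j _ => mul_nonneg (hA j i) (hβ j).le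
    simp only [hC]; linarith
  have hCb : ∀ i, ∑ j ∈ Finset.univ.filter (fun j => j ≠ i), A j i * β j ≤ C := by
    intro i
    have h1 : ∑ j ∈ Finset.univ.filter (fun j => j ≠ i), A j i * β j ≤ ∑ j, A j i * β j :=
      Finset.sum_le_sum_of_subset_of_nonneg (Finset.filter_subset _ _)
        (fun j _ _ => mul_nonneg (hA j i) (hβ j).le)
    have h2 : ∑ j, A j i * β j ≤ ∑ i', ∑ j, A j i' * β j :=
      Finset.single_le_sum
        (fun i' _ => Finset.sum_nonneg fun j _ => mul_nonneg (hA j i') (hβ j).le)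
        (Finset.mem_univ i)
    simp only [hC]; linarith
  set K : ℝ := (n : ℝ) * (4 * C) with hK
  have hSlb : ∀ t i,
      -(C * u t) ≤ ∑ j ∈ Finset.univ.filter (fun j => j ≠ i), A j i * β j * p t j := by
    intro t i
    have hpl : ∀ j, -(u t) ≤ p t j := by
      intro j
      have h1 : -(p t j) ≤ N t j := le_max_left _ _
      have h2 := hNle t j
      linarith
    have h3 : ∑ j ∈ Finset.univ.filter (fun j => j ≠ i), A j i * β j * (-(u t))
        ≤ ∑ j ∈ Finset.univ.filter (fun j => j ≠ i), A j i * β j * p t j :=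
      Finset.sum_le_sum fun j _ =>
        mul_le_mul_of_nonneg_left (hpl j) (mul_nonneg (hA j i) (hβ j).le)
    have h4 : ∑ j ∈ Finset.univ.filter (fun j => j ≠ i), A j i * β j * (-(u t))
        = -((∑ j ∈ Finset.univ.filter (fun j => j ≠ i), A j i * β j) * u t) := by
      rw [← Finset.sum_mul]; ring
    have h5 : (∑ j ∈ Finset.univ.filter (fun j => j ≠ i), A j i * β j) * u t ≤ C * u t :=
      mul_le_mul_of_nonneg_right (hCb i) (hunn t)
    linarith
  have key : ∀ t, u t ≤ 1 → U t ≤ K * u t + 0 := by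
    intro t hut
    have hCu : 0 ≤ C * u t := mul_nonneg hCpos.le (hunn t)
    have hterm : ∀ i, dN t i + dE t i ≤ 4 * C * u t := by
      intro i
      set S := ∑ j ∈ Finset.univ.filter (fun j => j ≠ i), A j i * β j * p t j with hSdef
      have hS : -(C * u t) ≤ S := hSlb t i
      have hNpi : -(p t i) ≤ N t i := le_max_left _ _
      have hEpi : p t i - 1 ≤ E t i := le_max_left _ _
      have hNi := hNle t i
      have hEi := hEle t i
      have hu0 := hunn t
      have hbN : dN t i ≤ 2 * (C * u t) := by
        simp only [hdN]
        split_ifs with h1 h2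
        · have hpneg : p t i < 0 := by linarith
          simp only [hF]
          rw [← hSdef]
          have e1 : 0 ≤ (1 - p t i) * (S + C * u t) :=
            mul_nonneg (by linarith) (by linarith)
          have e2 : 0 ≤ (1 + p t i) * (C * u t) := mul_nonneg (by linarith) hCu
          have e3 : δ i * p t i < 0 := mul_neg_of_pos_of_neg (hδ i) hpneg
          nlinarith [e1, e2, e3]
        · linarith
        · have hp0 : p t i = 0 := by linarith
          apply max_le _ (by linarith)
          simp only [hF]
          rw [← hSdef, hp0]
          nlinarith [hS, hCu]
      have hbE : dE t i ≤ 2 * (C * u t) := by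
        simp only [hdE]
        split_ifs with h1 h2
        · have hpgt : 1 < p t i := by linarith
          simp only [hF]
          rw [← hSdef]
          have e1 : 0 ≤ (p t i - 1) * (S + C * u t) :=
            mul_nonneg (by linarith) (by linarith)
          have e2 : 0 ≤ (1 - (p t i - 1)) * (C * u t) := mul_nonneg (by linarith) hCu
          have e3 : 0 < δ i * p t i := mul_pos (hδ i) (by linarith)
          nlinarith [e1, e2, e3]
        · linarith
        · have hp1 : p t i = 1 := by linarith
          apply max_le _ (by linarith)
          simp only [hF]
          rw [← hSdef, hp1]
          nlinarith [hCu, hδ i]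
      linarith
    have hsum : U t ≤ (n : ℝ) * (4 * C * u t) := by
      simp only [hU]
      calc ∑ i, (dN t i + dE t i) ≤ ∑ _i : Fin n, 4 * C * u t :=
            Finset.sum_le_sum fun i _ => hterm i
        _ = (n : ℝ) * (4 * C * u t) := by
            rw [Finset.sum_const, Finset.card_univ, Fintype.card_fin, nsmul_eq_mul]
    have heq : (n : ℝ) * (4 * C * u t) = K * u t + 0 := by simp only [hK]; ring
    linarith
  have hu00 : u 0 = 0 := by
    simp only [hudef]
    apply Finset.sum_eq_zero
    intro i _
    have h := h0 i
    have h1 : N 0 i = 0 := max_eq_right (by linarith [h.1])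
    have h2 : E 0 i = 0 := max_eq_right (by linarith [h.2])
    rw [h1, h2, add_zero]
  have main : ∀ T, 0 ≤ T → ∀ s ∈ Icc (0:ℝ) T, u s = 0 := by
    intro T hT
    set V : Set ℝ := {t | t ∈ Icc (0:ℝ) T ∧ ∀ s ∈ Icc (0:ℝ) t, u s = 0} with hV
    have h0V : (0:ℝ) ∈ V := by
      refine ⟨⟨le_refl 0, hT⟩, fun s hs => ?_⟩
      have hs0 : s = 0 := le_antisymm hs.2 hs.1
      rw [hs0]; exact hu00
    have hVne : V.Nonempty := ⟨0, h0V⟩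
    have hVbdd : BddAbove V := ⟨T, fun x hx => hx.1.2⟩
    set c := sSup V with hc
    have hc0 : 0 ≤ c := le_csSup hVbdd h0V
    have hcT : c ≤ T := csSup_le hVne fun x hx => hx.1.2
    have hzero_lt : ∀ s, 0 ≤ s → s < c → u s = 0 := by
      intro s hs0 hsc
      obtain ⟨x, hxV, hsx⟩ := exists_lt_of_lt_csSup hVne hsc
      exact hxV.2 s ⟨hs0, hsx.le⟩
    have hzc : u c = 0 := by
      rcases eq_or_lt_of_le hc0 with h | h
      · rw [← h]; exact hu00
      · have h1 : Tendsto u (nhdsWithin c (Iio c)) (nhds (u c)) :=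
          (hucont.tendsto c).mono_left nhdsWithin_le_nhds
        have h2 : Tendsto u (nhdsWithin c (Iio c)) (nhds 0) := by
          refine Tendsto.congr' ?_ tendsto_const_nhds
          filter_upwards [Ioo_mem_nhdsLT h] with s hs
          exact (hzero_lt s hs.1.le hs.2).symm
        exact tendsto_nhds_unique h1 h2
    have hzero_le : ∀ s, 0 ≤ s → s ≤ c → u s = 0 := by
      intro s hs0 hsc
      rcases lt_or_eq_of_le hsc with h | h
      · exact hzero_lt s hs0 h
      · rw [h]; exact hzc
    have hceq : c = T := by
      by_contra hne
      have hlt : c < T := lt_of_le_of_ne hcT hne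
      have hev : ∀ᶠ s in nhds c, u s < 1 := by
        have h1 : Tendsto u (nhds c) (nhds 0) := by rw [← hzc]; exact hucont.tendsto c
        exact h1.eventually_lt_const one_pos
      obtain ⟨ε, hε, hball⟩ := Metric.eventually_nhds_iff.1 hev
      set b := min (c + ε / 2) T with hb
      have hcb : c < b := lt_min (by linarith) hlt
      have hbT : b ≤ T := min_le_right _ _
      have hsmall : ∀ x ∈ Icc c b, u x < 1 := by
        intro x hx
        apply hball
        have hxb : x ≤ c + ε / 2 := le_trans hx.2 (min_le_left _ _)
        rw [Real.dist_eq, abs_lt]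
        constructor <;> [linarith [hx.1]; linarith]
      have hgr := le_gronwallBound_of_liminf_deriv_right_le (f := u) (f' := U)
        (δ := 0) (K := K) (ε := 0) (a := c) (b := b)
        hucont.continuousOn
        (fun x _ r hr => by
          have hfr := (huder x).liminf_right_slope_le hr
          refine hfr.mono fun z hz => ?_
          rwa [slope_def_field, div_eq_inv_mul] at hz)
        (le_of_eq hzc)
        (fun x hx => key x (hsmall x ⟨hx.1, hx.2.le⟩).le)
      have hbz : ∀ x ∈ Icc c b, u x = 0 := by
        intro x hx
        have h1 := hgr x hx
        rw [gronwallBound_ε0_δ0] at h1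
        exact le_antisymm h1 (hunn x)
      have hbV : b ∈ V := by
        refine ⟨⟨le_trans hc0 hcb.le, hbT⟩, fun s hs => ?_⟩
        rcases le_or_gt s c with h | h
        · exact hzero_le s hs.1 h
        · exact hbz s ⟨h.le, hs.2⟩
      have hble : b ≤ c := le_csSup hVbdd hbV
      linarith
    intro s hs
    exact hzero_le s hs.1 (hceq ▸ hs.2)
  intro t ht i
  have hut : u t = 0 := main t ht t ⟨ht, le_refl t⟩
  have hsum : ∑ j, (N t j + E t j) = 0 := hut
  have hterm0 : N t i + E t i = 0 :=
    (Finset.sum_eq_zero_iff_of_nonneg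
      (fun j _ => add_nonneg (hNnn t j) (hEnn t j))).1 hsum i (Finset.mem_univ i)
  have hN0 : N t i = 0 := le_antisymm (by linarith [hNnn t i, hEnn t i]) (hNnn t i)
  have hE0 : E t i = 0 := le_antisymm (by linarith [hNnn t i, hEnn t i]) (hEnn t i)
  have h1 : -(p t i) ≤ N t i := le_max_left _ _
  have h2 : p t i - 1 ≤ E t i := le_max_left _ _
  constructor
  · linarith [hN0 ▸ h1]
  · linarith [hE0 ▸ h2]
end

section
/- Let A be nonnegative with zero diagonal, B, D positive diagonal, and suppose μ(AᵀB − D) < 0 (equivalently ρ(D^{-1}AᵀB) < 1). Then along the SIS dynamics ṗ = (AᵀB − D)p − diag(p)AᵀB p with p(0) ∈ [0,1]ⁿ, there exists a positive diagonal matrix R₁ and a positive definite K such that the Lyapunov function V(p) = pᵀR₁p satisfies V̇(p) ≤ −pᵀKp along trajectories in [0,1]ⁿ; hence the origin (disease-free state) is globally asymptotically stable on [0,1]ⁿ. -/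
open Matrix Set Filter

open scoped NNReal ENNReal Pointwise
open Topology
attribute [local instance] Matrix.linftyOpNormedRing Matrix.linftyOpNormedAlgebra

theorem entry_le_norm {n : ℕ} (M : Matrix (Fin n) (Fin n) ℂ) (i j : Fin n) : ‖M i j‖ ≤ ‖M‖ := by
  rw [Matrix.linfty_opNorm_def]
  calc ‖M i j‖ ≤ ∑ k, ‖M i k‖ := Finset.single_le_sum (f := fun k => ‖M i k‖) (fun k _ => norm_nonneg _) (Finset.mem_univ j)
    _ ≤ _ := by
        have : (∑ k, ‖M i k‖₊) ≤ (Finset.univ : Finset (Fin n)).sup fun i => ∑ j, ‖M i j‖₊ :=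
          Finset.le_sup (f := fun i => ∑ j, ‖M i j‖₊) (Finset.mem_univ i)
        have := NNReal.coe_le_coe.mpr this
        push_cast at this
        simpa using this

theorem norm_pow_tendsto {n : ℕ} [NeZero n] (Pc : Matrix (Fin n) (Fin n) ℂ)
    (h : spectralRadius ℂ Pc < 1) : Tendsto (fun m => ‖Pc ^ m‖) atTop (𝓝 0) := by
  have hg := spectrum.pow_nnnorm_pow_one_div_tendsto_nhds_spectralRadius Pc
  obtain ⟨t, ht1, ht2⟩ := exists_between h
  lift t to ℝ≥0 using ht2.trans_le le_top |>.ne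
  have htlt : t < 1 := by exact_mod_cast ht2
  have hev : ∀ᶠ m : ℕ in atTop, (‖Pc ^ m‖₊ : ENNReal) ^ (1/(m:ℝ)) < (t : ENNReal) :=
    hg.eventually_lt_const ht1
  have hev2 : ∀ᶠ m : ℕ in atTop, ‖Pc ^ m‖ ≤ (t:ℝ) ^ m := by
    filter_upwards [hev, eventually_ge_atTop 1] with m hm hm1
    have hm0 : (m : ℝ) ≠ 0 := by positivity
    have : ((‖Pc ^ m‖₊ : ENNReal) ^ (1/(m:ℝ))) ^ (m:ℝ) ≤ ((t:ENNReal)) ^ (m:ℝ) :=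
      ENNReal.rpow_le_rpow hm.le (by positivity)
    rw [← ENNReal.rpow_mul, one_div, inv_mul_cancel₀ hm0, ENNReal.rpow_one,
      ENNReal.rpow_natCast, ← ENNReal.coe_pow, ENNReal.coe_le_coe] at this
    have h2 : ‖Pc ^ m‖ ≤ ((t ^ m : ℝ≥0) : ℝ) := this
    simpa using h2
  have ht0 : Tendsto (fun m : ℕ => (t:ℝ) ^ m) atTop (𝓝 0) :=
    tendsto_pow_atTop_nhds_zero_of_lt_one t.coe_nonneg htlt
  exact tendsto_of_tendsto_of_tendsto_of_le_of_le' tendsto_const_nhds ht0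
    (Eventually.of_forall fun m => norm_nonneg _) hev2


theorem posvec {n : ℕ} [NeZero n] (N : Matrix (Fin n) (Fin n) ℝ)
    (hdet : IsUnit N.det) (ε : ℝ) (hε : 0 < ε)
    (hP : ∀ i j, 0 ≤ (1 + ε • N) i j)
    (hsp : ∀ z ∈ spectrum ℂ (((1 + ε • N).map Complex.ofReal)), ‖z‖₊ < 1) :
    ∃ v : Fin n → ℝ, (∀ i, 1 ≤ v i) ∧ N *ᵥ v = fun _ => -(1/ε) := by
  classical
  set P : Matrix (Fin n) (Fin n) ℝ := 1 + ε • N with hPdef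
  -- powers have nonneg entries
  have hPpow : ∀ m : ℕ, ∀ i j, 0 ≤ (P ^ m) i j := by
    intro m
    induction m with
    | zero => intro i j; by_cases h : i = j <;> simp [h, Matrix.one_apply]
    | succ m ih =>
      intro i j
      rw [pow_succ, Matrix.mul_apply]
      exact Finset.sum_nonneg fun k _ => mul_nonneg (ih i k) (hP k j)
  -- complex side
  set Φ : Matrix (Fin n) (Fin n) ℝ →+* Matrix (Fin n) (Fin n) ℂ :=
    (Complex.ofRealHom.mapMatrix) with hΦ
  have hΦapp : ∀ M : Matrix (Fin n) (Fin n) ℝ, Φ M = M.map Complex.ofReal := fun _ => rfl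
  have hrad : spectralRadius ℂ (Φ P) < 1 := by
    have := spectrum.spectralRadius_lt_of_forall_lt (Φ P) (by rw [hΦapp]; exact hsp)
    simpa using this
  have hnorm : Tendsto (fun m => ‖(Φ P) ^ m‖) atTop (𝓝 0) := norm_pow_tendsto _ hrad
  have hentry : ∀ i j, Tendsto (fun m => (P ^ m) i j) atTop (𝓝 0) := by
    intro i j
    apply squeeze_zero_norm _ hnorm
    intro m
    have h1 : ((Φ P) ^ m) i j = ((P ^ m) i j : ℂ) := by
      rw [← map_pow, hΦapp]; rfl
    calc ‖(P ^ m) i j‖ = ‖((Φ P) ^ m) i j‖ := by rw [h1]; simp [Complex.norm_real]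
      _ ≤ ‖(Φ P) ^ m‖ := entry_le_norm _ i j
  -- define v
  set v : Fin n → ℝ := N⁻¹ *ᵥ (fun _ => -(1/ε)) with hv
  have hNv : N *ᵥ v = fun _ => -(1/ε) := by
    rw [hv, Matrix.mulVec_mulVec, Matrix.mul_nonsing_inv _ hdet, Matrix.one_mulVec]
  have hone : v = (fun _ => (1:ℝ)) + P *ᵥ v := by
    have : P *ᵥ v = v + ε • (N *ᵥ v) := by
      rw [hPdef, Matrix.add_mulVec, Matrix.one_mulVec, Matrix.smul_mulVec]
    rw [this, hNv]
    funext i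
    simp [Pi.add_apply]
    field_simp
    ring
  -- v = partial sums + remainder
  have hiter : ∀ m : ℕ, v = (∑ k ∈ Finset.range m, (P ^ k)) *ᵥ (fun _ => (1:ℝ)) + (P ^ m) *ᵥ v := by
    intro m
    induction m with
    | zero => simp
    | succ m ih =>
      have hPm : (P ^ m) *ᵥ v = (P ^ m) *ᵥ (fun _ => (1:ℝ)) + (P ^ (m+1)) *ᵥ v := by
        nth_rewrite 1 [hone]
        rw [Matrix.mulVec_add, pow_succ, ← Matrix.mulVec_mulVec]
      rw [Finset.sum_range_succ, Matrix.add_mulVec]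
      calc v = (∑ k ∈ Finset.range m, (P ^ k)) *ᵥ (fun _ => (1:ℝ)) + (P ^ m) *ᵥ v := ih
        _ = _ := by rw [hPm]; abel
  refine ⟨v, fun i => ?_, hNv⟩
  -- v i ≥ 1 + (P^m v) i for m ≥ 1
  have hbound : ∀ m : ℕ, 1 ≤ m → 1 + ((P ^ m) *ᵥ v) i ≤ v i := by
    intro m hm
    have := congrFun (hiter m) i
    rw [this]
    simp only [Pi.add_apply]
    have hsum : 1 ≤ ((∑ k ∈ Finset.range m, (P ^ k)) *ᵥ (fun _ => (1:ℝ))) i := by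
      have hexp : ((∑ k ∈ Finset.range m, (P ^ k)) *ᵥ (fun _ => (1:ℝ))) i
          = ∑ k ∈ Finset.range m, ((P ^ k) *ᵥ (fun _ => (1:ℝ))) i := by
        simp only [Matrix.mulVec, dotProduct, Finset.sum_apply, Finset.sum_mul]
        rw [Finset.sum_comm]
        simp [Matrix.sum_apply, Finset.sum_mul]
      rw [hexp]
      have h0 : ((P ^ 0) *ᵥ (fun _ => (1:ℝ))) i = 1 := by simp
      have hterm : ∀ k ∈ Finset.range m, 0 ≤ ((P ^ k) *ᵥ (fun _ => (1:ℝ))) i := by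
        intro k _
        unfold Matrix.mulVec dotProduct
        exact Finset.sum_nonneg fun j _ => by simpa using hPpow k i j
      calc (1:ℝ) = ((P ^ 0) *ᵥ (fun _ => (1:ℝ))) i := h0.symm
        _ ≤ ∑ k ∈ Finset.range m, ((P ^ k) *ᵥ (fun _ => (1:ℝ))) i :=
            Finset.single_le_sum hterm (Finset.mem_range.mpr hm)
    linarith
  have htend : Tendsto (fun m => 1 + ((P ^ m) *ᵥ v) i) atTop (𝓝 1) := by
    have : Tendsto (fun m => ((P ^ m) *ᵥ v) i) atTop (𝓝 0) := by
      have : ∀ m, ((P ^ m) *ᵥ v) i = ∑ j, (P ^ m) i j * v j := fun m => rfl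
      simp only [this]
      have := tendsto_finset_sum (Finset.univ : Finset (Fin n))
        (fun j _ => (hentry i j).mul_const (v j))
      simpa using this
    simpa using (tendsto_const_nhds (x := (1:ℝ))).add this
  exact le_of_tendsto htend (eventually_atTop.mpr ⟨1, hbound⟩)

theorem eps_choice {n : ℕ} [NeZero n] (Nc : Matrix (Fin n) (Fin n) ℂ)
    (hHur : ∀ z ∈ spectrum ℂ Nc, z.re < 0) :
    ∃ ε₀ : ℝ, 0 < ε₀ ∧ ∀ ε : ℝ, 0 < ε → ε ≤ ε₀ →
      ∀ z ∈ spectrum ℂ (1 + (ε:ℂ) • Nc), ‖z‖₊ < 1 := by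
  have hne : (spectrum ℂ Nc).Nonempty := spectrum.nonempty Nc
  have hcpt : IsCompact (spectrum ℂ Nc) := spectrum.isCompact Nc
  obtain ⟨z₀, hz₀, hmax⟩ := hcpt.exists_isMaxOn hne (Complex.continuous_re.continuousOn)
  set c : ℝ := -z₀.re with hc
  have hcpos : 0 < c := by simpa [hc] using hHur z₀ hz₀
  set Mb : ℝ := ‖Nc‖ with hMb
  refine ⟨c / (Mb^2 + 1), by positivity, fun ε hε hεle z hz => ?_⟩
  -- rewrite spectrum
  have hspec : spectrum ℂ (1 + (ε:ℂ) • Nc)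
      = (fun μ : ℂ => 1 + (ε:ℂ) * μ) '' spectrum ℂ Nc := by
    have h1 : spectrum ℂ ((Units.mk0 (ε:ℂ) (by exact_mod_cast hε.ne')) • Nc)
        = (Units.mk0 (ε:ℂ) (by exact_mod_cast hε.ne')) • spectrum ℂ Nc :=
      spectrum.unit_smul_eq_smul Nc _
    have h2 := spectrum.singleton_add_eq (R := ℂ)
      ((Units.mk0 (ε:ℂ) (by exact_mod_cast hε.ne')) • Nc) 1
    rw [h1] at h2
    have h3 : (algebraMap ℂ (Matrix (Fin n) (Fin n) ℂ)) 1 = 1 := map_one _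
    rw [h3] at h2
    have he : (1 : Matrix (Fin n) (Fin n) ℂ) + (ε:ℂ) • Nc
        = 1 + (Units.mk0 (ε:ℂ) (by exact_mod_cast hε.ne')) • Nc := by
      simp [Units.smul_def]
    rw [he, ← h2]
    ext w
    constructor
    · rintro ⟨x, hx, y, hy, rfl⟩
      rcases hy with ⟨μ, hμ, rfl⟩
      rcases hx
      exact ⟨μ, hμ, by simp [Units.smul_def, mul_comm]⟩
    · rintro ⟨μ, hμ, rfl⟩
      exact ⟨1, rfl, (ε:ℂ) * μ, ⟨μ, hμ, by simp [Units.smul_def]⟩, rfl⟩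
  rw [hspec] at hz
  obtain ⟨μ, hμ, rfl⟩ := hz
  -- now estimate ‖1 + ε μ‖ < 1
  have hre : μ.re ≤ -c := by
    have h' : μ.re ≤ z₀.re := hmax hμ
    rw [hc]; linarith
  have habs : ‖μ‖ ≤ Mb := spectrum.norm_le_norm_of_mem hμ
  have key : ‖1 + (ε:ℂ) * μ‖ < 1 := by
    have h1 : ‖1 + (ε:ℂ) * μ‖^2 = (1 + ε * μ.re)^2 + (ε * μ.im)^2 := by
      rw [Complex.sq_norm, Complex.normSq_apply]
      simp
      ring
    have hsq : μ.re^2 + μ.im^2 ≤ Mb^2 := by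
      have : ‖μ‖^2 ≤ Mb^2 := by nlinarith [norm_nonneg μ]
      rw [Complex.sq_norm, Complex.normSq_apply] at this
      nlinarith [this]
    have hεMb : ε * (Mb^2) ≤ c := by
      have hMb1 : 0 < Mb^2 + 1 := by positivity
      rw [le_div_iff₀ hMb1] at hεle
      nlinarith
    nlinarith [norm_nonneg (1 + (ε:ℂ) * μ), sq_nonneg (ε*μ.im), sq_nonneg ε,
      mul_le_mul_of_nonneg_left hsq (sq_nonneg ε),
      mul_le_mul_of_nonneg_left hre hε.le,
      mul_le_mul_of_nonneg_left hεMb hε.le]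
  exact_mod_cast key

theorem spec_transpose {n : ℕ} (X : Matrix (Fin n) (Fin n) ℂ) :
    spectrum ℂ Xᵀ = spectrum ℂ X := by
  ext z
  rw [spectrum.mem_iff, spectrum.mem_iff]
  have h1 : algebraMap ℂ (Matrix (Fin n) (Fin n) ℂ) z - Xᵀ
      = (algebraMap ℂ (Matrix (Fin n) (Fin n) ℂ) z - X)ᵀ := by
    rw [Matrix.transpose_sub]
    congr 1
    rw [Matrix.algebraMap_eq_diagonal]
    exact (Matrix.diagonal_transpose _).symm
  rw [h1, Matrix.isUnit_iff_isUnit_det, Matrix.det_transpose, ← Matrix.isUnit_iff_isUnit_det]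

theorem det_unit_of_hurwitz {n : ℕ} (N : Matrix (Fin n) (Fin n) ℝ)
    (hHur : ∀ z ∈ spectrum ℂ (N.map Complex.ofReal), z.re < 0) : IsUnit N.det := by
  have h0 : (0:ℂ) ∉ spectrum ℂ (N.map Complex.ofReal) := fun h => by simpa using hHur 0 h
  rw [spectrum.zero_mem_iff] at h0
  push_neg at h0
  rw [Matrix.isUnit_iff_isUnit_det] at h0
  have : (N.map Complex.ofReal).det = ((N.det : ℝ) : ℂ) := by
    have h := RingHom.map_det Complex.ofRealHom N
    have h2 : Complex.ofRealHom.mapMatrix N = N.map Complex.ofReal := rfl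
    rw [h2] at h
    exact h.symm
  rw [this] at h0
  have hne : N.det ≠ 0 := by
    intro h
    rw [h] at h0
    simpa using h0
  exact isUnit_iff_ne_zero.mpr hne

theorem quad_comp {n : ℕ} (K₀ : Matrix (Fin n) (Fin n) ℝ) (v : Fin n → ℝ)
    (hsym : ∀ i j, K₀ i j = K₀ j i) (hoff : ∀ i j, i ≠ j → K₀ i j ≤ 0)
    (hv : ∀ i, 0 < v i) (x : Fin n → ℝ) :
    ∑ i, ((K₀ *ᵥ v) i / v i) * x i ^ 2 ≤ x ⬝ᵥ (K₀ *ᵥ x) := by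
  classical
  set F : Fin n → Fin n → ℝ :=
    fun i j => x i * (K₀ i j * x j) - K₀ i j * v j * x i ^ 2 / v i with hF
  have hx : x ⬝ᵥ (K₀ *ᵥ x) - (∑ i, ((K₀ *ᵥ v) i / v i) * x i ^ 2) = ∑ i, ∑ j, F i j := by
    simp only [dotProduct, Matrix.mulVec, hF]
    rw [← Finset.sum_sub_distrib]
    congr 1; funext i
    rw [Finset.mul_sum, Finset.sum_div, Finset.sum_mul, ← Finset.sum_sub_distrib]
    congr 1; funext j
    ring
  have hswap : (∑ i, ∑ j, F i j) = ∑ i, ∑ j, F j i := by rw [Finset.sum_comm]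
  have hhalf : (∑ i, ∑ j, F i j)
      = ∑ i, ∑ j, (1/2) * (F i j + F j i) := by
    have h1 : ∀ i j : Fin n, (1/2) * (F i j + F j i) = (1/2)*F i j + (1/2)*F j i :=
      fun i j => by ring
    simp only [h1, Finset.sum_add_distrib]
    have h2 : (∑ i, ∑ j, (1/2)*F j i) = ∑ i, ∑ j, (1/2)*F i j := by rw [Finset.sum_comm]
    have h3 : (∑ i, ∑ j, (1/2)*F i j) = (1/2) * ∑ i, ∑ j, F i j := by
      simp only [← Finset.mul_sum]
    rw [h2, h3]
    ring
  have hptwise : ∀ i j, (1/2) * (F i j + F j i)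
      = (1/2) * (-K₀ i j) * v i * v j * (x i / v i - x j / v j)^2 := by
    intro i j
    have hvi := (hv i).ne'
    have hvj := (hv j).ne'
    rw [hF]
    simp only
    rw [hsym j i]
    field_simp
    ring
  have hnn : ∀ i j, 0 ≤ (1/2) * (-K₀ i j) * v i * v j * (x i / v i - x j / v j)^2 := by
    intro i j
    rcases eq_or_ne i j with rfl | hne
    · simp
    · have h1 : 0 ≤ -K₀ i j := by linarith [hoff i j hne]
      exact mul_nonneg (mul_nonneg (mul_nonneg
        (mul_nonneg (by norm_num) h1) (hv i).le) (hv j).le) (sq_nonneg _)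
  have : 0 ≤ ∑ i, ∑ j, F i j := by
    rw [hhalf]
    apply Finset.sum_nonneg; intro i _
    apply Finset.sum_nonneg; intro j _
    rw [hptwise]
    exact hnn i j
  linarith [hx ▸ this]

theorem deriv_nonpos_left {g : ℝ → ℝ} {τ d : ℝ} (hτ : 0 < τ)
    (hg : HasDerivAt g d τ) (hpos : ∀ t, 0 ≤ t → t < τ → 0 < g t) (h0 : g τ = 0) : d ≤ 0 := by
  have hs := hasDerivAt_iff_tendsto_slope.mp hg
  have h2 : Tendsto (slope g τ) (𝓝[<] τ) (𝓝 d) :=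
    hs.mono_left (nhdsWithin_mono τ (fun x hx => ne_of_lt hx))
  refine le_of_tendsto h2 ?_
  filter_upwards [Ioo_mem_nhdsLT_of_mem (Set.mem_Ioc.mpr ⟨hτ, le_refl τ⟩)] with t ht
  have hgt : 0 < g t := hpos t ht.1.le ht.2
  have : slope g τ t = g t / (t - τ) := by
    rw [slope_def_field, h0]; ring_nf
  rw [this]
  exact le_of_lt (div_neg_of_pos_of_neg hgt (by linarith [ht.2]))

theorem box_invariant {n : ℕ} (C : Matrix (Fin n) (Fin n) ℝ) (hC : ∀ i j, 0 ≤ C i j)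
    (δ : Fin n → ℝ) (hδ : ∀ i, 0 < δ i) (p : ℝ → Fin n → ℝ)
    (hd : ∀ i t, HasDerivAt (fun s => p s i) ((1 - p t i) * (C *ᵥ p t) i - δ i * p t i) t)
    (h0 : ∀ i, p 0 i ∈ Set.Icc (0:ℝ) 1) :
    ∀ T, 0 ≤ T → ∀ i, p T i ∈ Set.Icc (0:ℝ) 1 := by
  classical
  set Cb : ℝ := ∑ i, ∑ j, C i j with hCb
  have hCb0 : 0 ≤ Cb := Finset.sum_nonneg fun i _ => Finset.sum_nonneg fun j _ => hC i j
  have hrow : ∀ i, (∑ j, C i j) ≤ Cb := fun i =>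
    Finset.single_le_sum (f := fun i => ∑ j, C i j)
      (fun k _ => Finset.sum_nonneg fun j _ => hC k j) (Finset.mem_univ i)
  set L : ℝ := 2 * Cb + 1 with hL
  have hL0 : 0 < L := by positivity
  have hcont : ∀ i, Continuous fun t => p t i := fun i =>
    continuous_iff_continuousAt.mpr fun t => (hd i t).continuousAt
  intro T hT
  -- key bound with margin η
  have key : ∀ η : ℝ, 0 < η → η * Real.exp (L*T) ≤ 1 →
      ∀ t ∈ Set.Icc 0 T, ∀ i, -(η * Real.exp (L*t)) < p t i ∧ p t i < 1 + η * Real.exp (L*t) := by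
    intro η hη hη1
    set lo : ℝ → ℝ := fun t => -(η * Real.exp (L*t)) with hlo
    set hi : ℝ → ℝ := fun t => 1 + η * Real.exp (L*t) with hhi
    set B : Set ℝ := {t | t ∈ Set.Icc 0 T ∧ ∃ i, p t i ≤ lo t ∨ hi t ≤ p t i} with hB
    have hcontlo : Continuous lo := by fun_prop
    have hconthi : Continuous hi := by fun_prop
    have hBclosed : IsClosed B := by
      have : B = Set.Icc 0 T ∩ ⋃ i : Fin n,
          ({t | p t i ≤ lo t} ∪ {t | hi t ≤ p t i}) := by
        ext t
        simp only [hB, Set.mem_setOf_eq, Set.mem_inter_iff, Set.mem_iUnion, Set.mem_union]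
      rw [this]
      exact isClosed_Icc.inter (isClosed_iUnion_of_finite fun i =>
        (isClosed_le (hcont i) hcontlo).union (isClosed_le hconthi (hcont i)))
    have hexp_le : ∀ t ∈ Set.Icc (0:ℝ) T, η * Real.exp (L*t) ≤ 1 := by
      intro t ht
      have : Real.exp (L*t) ≤ Real.exp (L*T) :=
        Real.exp_le_exp.mpr (by nlinarith [ht.2, hL0.le])
      nlinarith [Real.exp_pos (L*t)]
    -- B is empty
    have hBempty : ¬ B.Nonempty := by
      intro hBne
      have hbdd : BddBelow B := ⟨0, fun x hx => hx.1.1⟩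
      set τ := sInf B with hτdef
      have hτB : τ ∈ B := hBclosed.csInf_mem hBne hbdd
      have hτIcc : τ ∈ Set.Icc 0 T := hτB.1
      have hτpos : 0 < τ := by
        rcases lt_or_eq_of_le hτIcc.1 with h | h
        · exact h
        · exfalso
          obtain ⟨i, hi'⟩ := hτB.2
          rw [← h] at hi'
          rcases hi' with h1 | h1
          · have := (h0 i).1
            simp [hlo] at h1
            linarith
          · have := (h0 i).2
            simp [hhi] at h1
            linarith
      have hbefore : ∀ t, 0 ≤ t → t < τ → ∀ i, lo t < p t i ∧ p t i < hi t := by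
        intro t ht0 htτ i
        have htB : t ∉ B := fun h => absurd (csInf_le hbdd h) (not_le.mpr htτ)
        have htIcc : t ∈ Set.Icc 0 T := ⟨ht0, htτ.le.trans hτIcc.2⟩
        by_contra hcon
        push_neg at hcon
        apply htB
        refine ⟨htIcc, i, ?_⟩
        rcases le_or_gt (p t i) (lo t) with h | h
        · exact Or.inl h
        · exact Or.inr (hcon h)
      have hatτ : ∀ j, lo τ ≤ p τ j ∧ p τ j ≤ hi τ := by
        intro j
        constructor
        · have htd : Tendsto (fun t => p t j - lo t) (𝓝[<] τ) (𝓝 (p τ j - lo τ)) :=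
            ((hcont j).sub hcontlo).continuousAt.tendsto.mono_left nhdsWithin_le_nhds
          have hev : ∀ᶠ t in 𝓝[<] τ, 0 ≤ p t j - lo t := by
            filter_upwards [Ioo_mem_nhdsLT_of_mem (Set.mem_Ioc.mpr ⟨hτpos, le_refl τ⟩)] with t ht
            linarith [(hbefore t ht.1.le ht.2 j).1]
          linarith [ge_of_tendsto htd hev]
        · have htd : Tendsto (fun t => hi t - p t j) (𝓝[<] τ) (𝓝 (hi τ - p τ j)) :=
            (hconthi.sub (hcont j)).continuousAt.tendsto.mono_left nhdsWithin_le_nhds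
          have hev : ∀ᶠ t in 𝓝[<] τ, 0 ≤ hi t - p t j := by
            filter_upwards [Ioo_mem_nhdsLT_of_mem (Set.mem_Ioc.mpr ⟨hτpos, le_refl τ⟩)] with t ht
            linarith [(hbefore t ht.1.le ht.2 j).2]
          linarith [ge_of_tendsto htd hev]
      set E : ℝ := η * Real.exp (L*τ) with hE
      have hE0 : 0 < E := by positivity
      have hE1 : E ≤ 1 := hexp_le τ hτIcc
      have hat1 : ∀ j, -(η * Real.exp (L*τ)) ≤ p τ j := fun j => (hatτ j).1
      have hat2 : ∀ j, p τ j ≤ 1 + η * Real.exp (L*τ) := fun j => (hatτ j).2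
      have habs : ∀ j, |p τ j| ≤ 1 + E := by
        intro j
        rw [abs_le]
        exact ⟨by linarith [hat1 j], by linarith [hat2 j]⟩
      have hCp_bound : ∀ i, |(C *ᵥ p τ) i| ≤ 2 * Cb := by
        intro i
        have h1 : |(C *ᵥ p τ) i| ≤ ∑ j, C i j * |p τ j| := by
          show |∑ j, C i j * p τ j| ≤ _
          refine (Finset.abs_sum_le_sum_abs _ _).trans ?_
          refine Finset.sum_le_sum fun j _ => ?_
          rw [abs_mul, abs_of_nonneg (hC i j)]
        refine h1.trans ?_
        calc ∑ j, C i j * |p τ j| ≤ ∑ j, C i j * 2 := by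
              refine Finset.sum_le_sum fun j _ => ?_
              exact mul_le_mul_of_nonneg_left (by linarith [habs j]) (hC i j)
          _ = (∑ j, C i j) * 2 := by rw [← Finset.sum_mul]
          _ ≤ Cb * 2 := by linarith [hrow i]
          _ = 2 * Cb := by ring
      have hCp_lower : ∀ i, -(E * Cb) ≤ (C *ᵥ p τ) i := by
        intro i
        have hterm : ∀ j, C i j * (-E) ≤ C i j * p τ j := fun j =>
          mul_le_mul_of_nonneg_left (by linarith [hat1 j]) (hC i j)
        calc -(E * Cb) ≤ -(E * ∑ j, C i j) := by nlinarith [hrow i]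
          _ = ∑ j, C i j * (-E) := by rw [← Finset.sum_mul]; ring_nf
          _ ≤ ∑ j, C i j * p τ j := Finset.sum_le_sum fun j _ => hterm j
          _ = (C *ᵥ p τ) i := rfl
      -- derivative of margin
      have hderivE : HasDerivAt (fun t => η * Real.exp (L*t)) (E * L) τ := by
        have h1 : HasDerivAt (fun t : ℝ => L * t) L τ := by
          simpa using (hasDerivAt_id τ).const_mul L
        have h2 := (Real.hasDerivAt_exp (L*τ)).comp τ h1
        have h3 := h2.const_mul η
        rw [hE, mul_assoc]; exact h3
      obtain ⟨i, hcase⟩ := hτB.2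
      rcases hcase with hlow | hup
      · -- p τ i = lo τ
        have heq : p τ i = lo τ := le_antisymm hlow (hatτ i).1
        set g : ℝ → ℝ := fun t => p t i - lo t with hg
        have hgd : HasDerivAt g
            (((1 - p τ i) * (C *ᵥ p τ) i - δ i * p τ i) + E * L) τ := by
          have : HasDerivAt (fun t => lo t) (-(E*L)) τ := by
            exact hderivE.neg
          simpa [hg, sub_neg_eq_add, Pi.sub_def] using (hd i τ).sub this
        have hgpos : ∀ t, 0 ≤ t → t < τ → 0 < g t := fun t h1 h2 => by
          have := (hbefore t h1 h2 i).1; simp [hg]; linarith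
        have hgz : g τ = 0 := by simp [hg, heq]
        have hle := deriv_nonpos_left hτpos hgd hgpos hgz
        -- estimate: derivative > 0
        have hpi : p τ i = -E := by simp [heq, hlo, hE]
        have h1p : 1 - p τ i = 1 + E := by rw [hpi]; ring
        have hprod : (1 - p τ i) * (C *ᵥ p τ) i ≥ -(2 * (E * Cb)) := by
          rcases le_or_gt 0 ((C *ᵥ p τ) i) with h | h
          · nlinarith
          · have := hCp_lower i
            rw [h1p]
            nlinarith
        have : 0 < ((1 - p τ i) * (C *ᵥ p τ) i - δ i * p τ i) + E * L := by
          have hδi := hδ i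
          rw [hpi] at *
          simp only [hL] at *
          nlinarith
        linarith
      · -- p τ i = hi τ
        have heq : p τ i = hi τ := le_antisymm (hatτ i).2 hup
        set g : ℝ → ℝ := fun t => hi t - p t i with hg
        have hgd : HasDerivAt g
            (E * L - ((1 - p τ i) * (C *ᵥ p τ) i - δ i * p τ i)) τ := by
          have : HasDerivAt (fun t => hi t) (E*L) τ := by
            simpa [hhi] using hderivE.const_add 1
          simpa [hg, Pi.sub_def] using this.sub (hd i τ)
        have hgpos : ∀ t, 0 ≤ t → t < τ → 0 < g t := fun t h1 h2 => by
          have := (hbefore t h1 h2 i).2; simp [hg]; linarith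
        have hgz : g τ = 0 := by simp [hg, heq]
        have hle := deriv_nonpos_left hτpos hgd hgpos hgz
        have hpi : p τ i = 1 + E := by simp [heq, hhi, hE]
        have h1p : 1 - p τ i = -E := by rw [hpi]; ring
        have : 0 < E * L - ((1 - p τ i) * (C *ᵥ p τ) i - δ i * p τ i) := by
          have hδi := hδ i
          have habs' := hCp_bound i
          have h2 : (1 - p τ i) * (C *ᵥ p τ) i ≤ E * (2 * Cb) := by
            rw [h1p]
            have := abs_le.mp habs'
            nlinarith
          rw [hpi]
          simp only [hL] at *
          nlinarith
        linarith
    intro t ht i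
    by_contra hcon
    apply hBempty
    refine ⟨t, ht, i, ?_⟩
    push_neg at hcon
    rcases le_or_gt (p t i) (-(η * Real.exp (L*t))) with h | h
    · exact Or.inl h
    · exact Or.inr (hcon h)
  -- now let η → 0
  intro i
  constructor
  · by_contra h
    push_neg at h
    set η : ℝ := min (Real.exp (-(L*T))) (-(p T i)/(2*Real.exp (L*T))) with hη
    have hη0 : 0 < η := lt_min (Real.exp_pos _) (div_pos (by linarith) (by positivity))
    have hη1 : η * Real.exp (L*T) ≤ 1 := by
      have hml := min_le_left (Real.exp (-(L*T))) (-(p T i)/(2*Real.exp (L*T)))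
      calc η * Real.exp (L*T) ≤ Real.exp (-(L*T)) * Real.exp (L*T) :=
            mul_le_mul_of_nonneg_right hml (Real.exp_pos _).le
        _ = 1 := by rw [← Real.exp_add]; simp
    have hb := (key η hη0 hη1 T ⟨hT, le_refl T⟩ i).1
    have h2 : η * Real.exp (L*T) ≤ -(p T i)/2 := by
      have hmr := min_le_right (Real.exp (-(L*T))) (-(p T i)/(2*Real.exp (L*T)))
      have hep := Real.exp_pos (L*T)
      calc η * Real.exp (L*T) ≤ (-(p T i)/(2*Real.exp (L*T))) * Real.exp (L*T) :=
            mul_le_mul_of_nonneg_right hmr hep.le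
        _ = -(p T i)/2 := by field_simp
    linarith
  · by_contra h
    push_neg at h
    set η : ℝ := min (Real.exp (-(L*T))) ((p T i - 1)/(2*Real.exp (L*T))) with hη
    have hη0 : 0 < η := lt_min (Real.exp_pos _) (div_pos (by linarith) (by positivity))
    have hη1 : η * Real.exp (L*T) ≤ 1 := by
      have hml := min_le_left (Real.exp (-(L*T))) ((p T i - 1)/(2*Real.exp (L*T)))
      calc η * Real.exp (L*T) ≤ Real.exp (-(L*T)) * Real.exp (L*T) :=
            mul_le_mul_of_nonneg_right hml (Real.exp_pos _).le
        _ = 1 := by rw [← Real.exp_add]; simp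
    have hb := (key η hη0 hη1 T ⟨hT, le_refl T⟩ i).2
    have h2 : η * Real.exp (L*T) ≤ (p T i - 1)/2 := by
      have hmr := min_le_right (Real.exp (-(L*T))) ((p T i - 1)/(2*Real.exp (L*T)))
      have hep := Real.exp_pos (L*T)
      calc η * Real.exp (L*T) ≤ ((p T i - 1)/(2*Real.exp (L*T))) * Real.exp (L*T) :=
            mul_le_mul_of_nonneg_right hmr hep.le
        _ = (p T i - 1)/2 := by field_simp
    linarith

theorem conv_lemma {n : ℕ} [NeZero n] (C : Matrix (Fin n) (Fin n) ℝ) (hC : ∀ i j, 0 ≤ C i j)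
    (δ : Fin n → ℝ) (p : ℝ → Fin n → ℝ)
    (hd : ∀ i t, HasDerivAt (fun s => p s i) ((1 - p t i) * (C *ᵥ p t) i - δ i * p t i) t)
    (hbox : ∀ t, 0 ≤ t → ∀ i, p t i ∈ Set.Icc (0:ℝ) 1)
    (w : Fin n → ℝ) (hw : ∀ i, 1 ≤ w i) (γ : ℝ) (hγ : 0 < γ)
    (hNTw : (C - Matrix.diagonal δ)ᵀ *ᵥ w = fun _ => -γ) :
    Tendsto p atTop (nhds 0) := by
  classical
  set Sw : ℝ := ∑ i, w i with hSw
  have hSw0 : 0 < Sw := by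
    have h1 : (Finset.univ : Finset (Fin n)).Nonempty := Finset.univ_nonempty
    have : (0:ℝ) < ∑ i : Fin n, w i :=
      Finset.sum_pos (fun i _ => lt_of_lt_of_le one_pos (hw i)) h1
    simpa [hSw] using this
  have hwSw : ∀ i, w i ≤ Sw := fun i =>
    Finset.single_le_sum (f := w) (fun j _ => le_trans zero_le_one (hw j)) (Finset.mem_univ i)
  set c : ℝ := γ / Sw with hc
  have hc0 : 0 < c := div_pos hγ hSw0
  set W : ℝ → ℝ := fun t => ∑ i, w i * p t i with hW
  have hWd : ∀ t, HasDerivAt W (∑ i, w i * ((1 - p t i) * (C *ᵥ p t) i - δ i * p t i)) t := by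
    intro t
    exact HasDerivAt.fun_sum (fun i _ => ((hd i t).const_mul (w i)))
  have hWpos : ∀ t, 0 ≤ t → 0 ≤ W t := by
    intro t ht
    exact Finset.sum_nonneg fun i _ =>
      mul_nonneg (le_trans zero_le_one (hw i)) (hbox t ht i).1
  -- derivative bound
  have hWbound : ∀ t, 0 ≤ t →
      (∑ i, w i * ((1 - p t i) * (C *ᵥ p t) i - δ i * p t i)) ≤ -(c * W t) := by
    intro t ht
    have hpt : ∀ i, 0 ≤ p t i := fun i => (hbox t ht i).1
    have hstep1 : ∀ i, w i * ((1 - p t i) * (C *ᵥ p t) i - δ i * p t i)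
        = w i * ((C *ᵥ p t) i - δ i * p t i) - w i * (p t i * (C *ᵥ p t) i) := by
      intro i; ring
    have hCpnn : ∀ i, 0 ≤ (C *ᵥ p t) i := by
      intro i
      show (0:ℝ) ≤ ∑ j, C i j * p t j
      exact Finset.sum_nonneg fun j _ => mul_nonneg (hC i j) (hpt j)
    have hquad : 0 ≤ ∑ i, w i * (p t i * (C *ᵥ p t) i) :=
      Finset.sum_nonneg fun i _ => mul_nonneg (le_trans zero_le_one (hw i))
        (mul_nonneg (hpt i) (hCpnn i))
    have hlin : (∑ i, w i * ((C *ᵥ p t) i - δ i * p t i)) = -γ * ∑ j, p t j := by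
      have h1 : ∀ i, w i * ((C *ᵥ p t) i - δ i * p t i)
          = ∑ j, w i * ((C - Matrix.diagonal δ) i j * p t j) := by
        intro i
        have hδsum : (∑ x, Matrix.diagonal δ i x * p t x) = δ i * p t i := by
          rw [Finset.sum_eq_single i]
          · simp
          · intro b _ hb
            rw [Matrix.diagonal_apply_ne' δ hb, zero_mul]
          · intro h; exact absurd (Finset.mem_univ i) h
        have hthis : (C *ᵥ p t) i - δ i * p t i = ∑ j, (C - Matrix.diagonal δ) i j * p t j := by
          simp only [Matrix.sub_apply, sub_mul, Finset.sum_sub_distrib, hδsum]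
          rfl
        rw [hthis, Finset.mul_sum]
      simp only [h1]
      rw [Finset.sum_comm]
      have h2 : ∀ j, (∑ i, w i * ((C - Matrix.diagonal δ) i j * p t j)) = -γ * p t j := by
        intro j
        have h3 : ((C - Matrix.diagonal δ)ᵀ *ᵥ w) j = -γ := congrFun hNTw j
        have h4 : (∑ i, (C - Matrix.diagonal δ) i j * w i) = -γ := by
          rw [← h3]
          simp [Matrix.mulVec, dotProduct, Matrix.transpose_apply, mul_comm]
        calc (∑ i, w i * ((C - Matrix.diagonal δ) i j * p t j))
            = (∑ i, (C - Matrix.diagonal δ) i j * w i) * p t j := by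
              rw [Finset.sum_mul]; congr 1; funext i; ring
          _ = -γ * p t j := by rw [h4]
      simp only [h2]
      rw [Finset.mul_sum]
    have hsum : W t / Sw ≤ ∑ j, p t j := by
      rw [div_le_iff₀ hSw0]
      calc W t = ∑ i, w i * p t i := rfl
        _ ≤ ∑ i, Sw * p t i := Finset.sum_le_sum fun i _ =>
            mul_le_mul_of_nonneg_right (hwSw i) (hpt i)
        _ = ∑ i, p t i * Sw := by simp [mul_comm]
        _ = (∑ j, p t j) * Sw := (Finset.sum_mul _ _ _).symm
    calc (∑ i, w i * ((1 - p t i) * (C *ᵥ p t) i - δ i * p t i))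
        = (∑ i, w i * ((C *ᵥ p t) i - δ i * p t i)) - ∑ i, w i * (p t i * (C *ᵥ p t) i) := by
          simp only [hstep1, Finset.sum_sub_distrib]
      _ ≤ ∑ i, w i * ((C *ᵥ p t) i - δ i * p t i) := by linarith
      _ = -γ * ∑ j, p t j := hlin
      _ ≤ -γ * (W t / Sw) := by
          have := hsum
          nlinarith
      _ = -(c * W t) := by rw [hc]; field_simp
  -- Gronwall
  set g : ℝ → ℝ := fun t => W t * Real.exp (c*t) with hg
  have hgd : ∀ t, HasDerivAt g
      ((∑ i, w i * ((1 - p t i) * (C *ᵥ p t) i - δ i * p t i)) * Real.exp (c*t)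
        + W t * (Real.exp (c*t) * c)) t := by
    intro t
    have he : HasDerivAt (fun t => Real.exp (c*t)) (Real.exp (c*t) * c) t := by
      have h1 : HasDerivAt (fun t : ℝ => c * t) c t := by
        simpa using (hasDerivAt_id t).const_mul c
      simpa [Function.comp_def] using (Real.hasDerivAt_exp (c*t)).comp t h1
    exact (hWd t).mul he
  have hganti : AntitoneOn g (Set.Ici 0) := by
    apply antitoneOn_of_deriv_nonpos (convex_Ici 0)
    · exact (Continuous.continuousOn (continuous_iff_continuousAt.mpr
        fun t => (hgd t).continuousAt))
    · intro x hx
      exact (hgd x).differentiableAt.differentiableWithinAt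
    · intro x hx
      rw [interior_Ici] at hx
      rw [(hgd x).deriv]
      have h1 := hWbound x (le_of_lt hx)
      have h2 := Real.exp_pos (c*x)
      nlinarith
  have hWle : ∀ t, 0 ≤ t → W t ≤ W 0 * Real.exp (-(c*t)) := by
    intro t ht
    have := hganti (Set.self_mem_Ici) ht ht
    have hg0 : g 0 = W 0 := by simp [hg]
    have hgt : g t = W t * Real.exp (c*t) := rfl
    rw [hg0, hgt] at this
    have he := Real.exp_pos (c*t)
    rw [Real.exp_neg]
    calc W t = W t * Real.exp (c*t) * (Real.exp (c*t))⁻¹ := by field_simp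
      _ ≤ W 0 * (Real.exp (c*t))⁻¹ :=
          mul_le_mul_of_nonneg_right this (inv_nonneg.mpr he.le)
  have hWtend : Tendsto W atTop (𝓝 0) := by
    have hexp : Tendsto (fun t : ℝ => W 0 * Real.exp (-(c*t))) atTop (𝓝 0) := by
      have h1 : Tendsto (fun t : ℝ => c * t) atTop atTop :=
        Tendsto.const_mul_atTop hc0 tendsto_id
      have h2 : Tendsto (fun t : ℝ => -(c * t)) atTop atBot := tendsto_neg_atBot_iff.mpr h1
      have h3 := Real.tendsto_exp_atBot.comp h2
      simpa using h3.const_mul (W 0)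
    apply tendsto_of_tendsto_of_tendsto_of_le_of_le' tendsto_const_nhds hexp
    · filter_upwards [eventually_ge_atTop (0:ℝ)] with t ht using hWpos t ht
    · filter_upwards [eventually_ge_atTop (0:ℝ)] with t ht using hWle t ht
  rw [tendsto_pi_nhds]
  intro i
  have hle : ∀ t, 0 ≤ t → p t i ≤ W t := by
    intro t ht
    have h1 : w i * p t i ≤ W t :=
      Finset.single_le_sum (f := fun j => w j * p t j)
        (fun j _ => mul_nonneg (le_trans zero_le_one (hw j)) ((hbox t ht j).1)) (Finset.mem_univ i)
    nlinarith [(hbox t ht i).1, hw i]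
  have : Tendsto (fun t => p t i) atTop (𝓝 0) := by
    apply tendsto_of_tendsto_of_tendsto_of_le_of_le' tendsto_const_nhds hWtend
    · filter_upwards [eventually_ge_atTop (0:ℝ)] with t ht using (hbox t ht i).1
    · filter_upwards [eventually_ge_atTop (0:ℝ)] with t ht using hle t ht
  simpa using this

theorem stmt12 {n : ℕ} (A : Matrix (Fin n) (Fin n) ℝ) (hA : ∀ i j, 0 ≤ A i j)
    (hAdiag : ∀ i, A i i = 0)
    (β δ : Fin n → ℝ) (hβ : ∀ i, 0 < β i) (hδ : ∀ i, 0 < δ i)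
    (hHur : IsHurwitz (Aᵀ * Matrix.diagonal β - Matrix.diagonal δ)) :
    ∃ r : Fin n → ℝ, (∀ i, 0 < r i) ∧
      ∃ K : Matrix (Fin n) (Fin n) ℝ, K.PosDef ∧
        (∀ p : Fin n → ℝ, (∀ i, p i ∈ Set.Icc (0:ℝ) 1) →
          2 * (p ⬝ᵥ (Matrix.diagonal r *ᵥ
            ((Aᵀ * Matrix.diagonal β - Matrix.diagonal δ) *ᵥ p -
              Matrix.diagonal p *ᵥ ((Aᵀ * Matrix.diagonal β) *ᵥ p))))
            ≤ -(p ⬝ᵥ (K *ᵥ p))) ∧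
        ∀ p : ℝ → Fin n → ℝ,
          (∀ i t, HasDerivAt (fun s => p s i)
            (((Aᵀ * Matrix.diagonal β - Matrix.diagonal δ) *ᵥ (p t) -
              Matrix.diagonal (p t) *ᵥ ((Aᵀ * Matrix.diagonal β) *ᵥ (p t))) i) t) →
          (∀ i, p 0 i ∈ Set.Icc (0:ℝ) 1) →
          Filter.Tendsto p Filter.atTop (nhds 0) := by
  classical
  rcases Nat.eq_zero_or_pos n with hn | hn
  · subst hn
    refine ⟨fun _ => 1, fun i => i.elim0, 1, ?_, ?_, ?_⟩
    · constructor
      · exact Matrix.isHermitian_one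
      · intro x hx
        exact absurd (Finsupp.ext fun i => Fin.elim0 i) hx
    · intro p hp
      simp [dotProduct]
    · intro p _ _
      have : p = fun _ => 0 := funext fun t => funext fun i => i.elim0
      rw [this]
      exact tendsto_const_nhds
  · have : NeZero n := ⟨Nat.pos_iff_ne_zero.mp hn⟩
    set C : Matrix (Fin n) (Fin n) ℝ := Aᵀ * Matrix.diagonal β with hCdef
    set N : Matrix (Fin n) (Fin n) ℝ := C - Matrix.diagonal δ with hNdef
    have hCnn : ∀ i j, 0 ≤ C i j := by
      intro i j
      rw [hCdef, Matrix.mul_diagonal]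
      exact mul_nonneg (hA j i) (hβ j).le
    have hNoff : ∀ i j, i ≠ j → N i j = C i j := by
      intro i j hij
      rw [hNdef]
      simp [Matrix.sub_apply, Matrix.diagonal_apply_ne _ hij]
    have hNdiag : ∀ i, N i i = -δ i := by
      intro i
      rw [hNdef]
      simp [Matrix.sub_apply, hCdef, Matrix.mul_diagonal, hAdiag i]
    have hHur' : ∀ z ∈ spectrum ℂ (N.map Complex.ofReal), z.re < 0 := hHur
    have hdet : IsUnit N.det := det_unit_of_hurwitz N hHur'
    have hdetT : IsUnit Nᵀ.det := by rwa [Matrix.det_transpose]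
    obtain ⟨ε₀, hε₀, heps⟩ := eps_choice (N.map Complex.ofReal) hHur'
    set Sδ : ℝ := ∑ i, δ i with hSδ
    have hSδ0 : 0 ≤ Sδ := Finset.sum_nonneg fun i _ => (hδ i).le
    have hδle : ∀ i, δ i ≤ Sδ := fun i =>
      Finset.single_le_sum (f := δ) (fun j _ => (hδ j).le) (Finset.mem_univ i)
    set ε : ℝ := min ε₀ (1/(Sδ+1)) with hεdef
    have hε : 0 < ε := lt_min hε₀ (by positivity)
    have hεle : ε ≤ ε₀ := min_le_left _ _
    have hεS : ε ≤ 1/(Sδ+1) := min_le_right _ _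
    have hP : ∀ i j, 0 ≤ (1 + ε • N) i j := by
      intro i j
      have hentry : (1 + ε • N) i j = (if i = j then (1:ℝ) else 0) + ε * N i j := by
        simp [Matrix.add_apply, Matrix.one_apply, Matrix.smul_apply]
      rw [hentry]
      by_cases hij : i = j
      · subst hij
        simp only [if_pos rfl]
        rw [hNdiag i]
        have h1 : ε * δ i ≤ 1 := by
          have h2 : ε * δ i ≤ (1/(Sδ+1)) * δ i :=
            mul_le_mul_of_nonneg_right hεS (hδ i).le
          have h3 : (1/(Sδ+1)) * δ i ≤ 1 := by
            rw [div_mul_eq_mul_div, div_le_one (by linarith)]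
            linarith [hδle i]
          linarith
        rw [mul_neg]
        norm_num
        linarith
      · simp only [if_neg hij]
        rw [hNoff i j hij]
        have := mul_nonneg hε.le (hCnn i j)
        linarith
    have hPT : ∀ i j, 0 ≤ (1 + ε • Nᵀ) i j := by
      have htr : (1 + ε • Nᵀ) = (1 + ε • N)ᵀ := by
        rw [Matrix.transpose_add, Matrix.transpose_one, Matrix.transpose_smul]
      intro i j
      rw [htr, Matrix.transpose_apply]
      exact hP j i
    have hmap : ∀ M : Matrix (Fin n) (Fin n) ℝ,
        (1 + ε • M).map Complex.ofReal = 1 + (ε:ℂ) • (M.map Complex.ofReal) := by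
      intro M
      ext i j
      by_cases hij : i = j <;>
        simp [Matrix.map_apply, Matrix.add_apply, Matrix.one_apply, Matrix.smul_apply, hij]
    have hsp : ∀ z ∈ spectrum ℂ (((1 + ε • N).map Complex.ofReal)), ‖z‖₊ < 1 := by
      rw [hmap]
      exact heps ε hε hεle
    have hspT : ∀ z ∈ spectrum ℂ (((1 + ε • Nᵀ).map Complex.ofReal)), ‖z‖₊ < 1 := by
      have htr2 : (1 + ε • Nᵀ).map Complex.ofReal = (((1 + ε • N).map Complex.ofReal))ᵀ := by
        rw [show (1 + ε • Nᵀ) = (1 + ε • N)ᵀ by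
          rw [Matrix.transpose_add, Matrix.transpose_one, Matrix.transpose_smul]]
        exact Matrix.transpose_map
      rw [htr2, spec_transpose]
      exact hsp
    obtain ⟨v, hv1, hNv⟩ := posvec N hdet ε hε hP hsp
    obtain ⟨w, hw1, hNTw⟩ := posvec Nᵀ hdetT ε hε hPT hspT
    have hv0 : ∀ i, 0 < v i := fun i => lt_of_lt_of_le one_pos (hv1 i)
    have hw0 : ∀ i, 0 < w i := fun i => lt_of_lt_of_le one_pos (hw1 i)
    set r : Fin n → ℝ := fun i => w i / v i with hrdef
    have hr : ∀ i, 0 < r i := fun i => div_pos (hw0 i) (hv0 i)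
    set R : Matrix (Fin n) (Fin n) ℝ := Matrix.diagonal r with hRdef
    set K₀ : Matrix (Fin n) (Fin n) ℝ := -(Nᵀ * R + R * N) with hK₀def
    have hK₀entry : ∀ i j, K₀ i j = -(N j i * r j + r i * N i j) := by
      intro i j
      rw [hK₀def, hRdef]
      simp [Matrix.neg_apply, Matrix.add_apply, Matrix.mul_diagonal, Matrix.diagonal_mul,
        Matrix.transpose_apply]
    have hK₀sym : ∀ i j, K₀ i j = K₀ j i := by
      intro i j; rw [hK₀entry, hK₀entry]; ring
    have hK₀off : ∀ i j, i ≠ j → K₀ i j ≤ 0 := by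
      intro i j hij
      rw [hK₀entry]
      have h1 : 0 ≤ N j i := by rw [hNoff j i (Ne.symm hij)]; exact hCnn j i
      have h2 : 0 ≤ N i j := by rw [hNoff i j hij]; exact hCnn i j
      nlinarith [hr i, hr j]
    have hRv : R *ᵥ v = w := by
      funext i
      rw [hRdef, Matrix.mulVec_diagonal]
      show w i / v i * v i = w i
      exact div_mul_cancel₀ (w i) (hv0 i).ne'
    have hK₀v : ∀ i, (K₀ *ᵥ v) i = (1/ε) * (1 + r i) := by
      intro i
      have h1 : K₀ *ᵥ v = -(Nᵀ *ᵥ (R *ᵥ v) + R *ᵥ (N *ᵥ v)) := by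
        rw [hK₀def, Matrix.neg_mulVec, Matrix.add_mulVec, ← Matrix.mulVec_mulVec,
          ← Matrix.mulVec_mulVec]
      rw [h1, hRv, hNv, hNTw]
      simp only [Pi.neg_apply, Pi.add_apply]
      rw [Matrix.mulVec_diagonal]
      field_simp
      ring
    set d : Fin n → ℝ := fun i => (K₀ *ᵥ v) i / v i with hddef
    have hd0 : ∀ i, 0 < d i := by
      intro i
      rw [hddef]
      apply div_pos _ (hv0 i)
      rw [hK₀v i]
      have := hr i
      positivity
    refine ⟨r, hr, Matrix.diagonal d, Matrix.PosDef.diagonal hd0, ?_, ?_⟩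
    · -- Lyapunov inequality
      intro p hp
      have hpnn : ∀ i, 0 ≤ p i := fun i => (hp i).1
      have hCp : ∀ i, 0 ≤ (C *ᵥ p) i := by
        intro i
        show (0:ℝ) ≤ ∑ j, C i j * p j
        exact Finset.sum_nonneg fun j _ => mul_nonneg (hCnn i j) (hpnn j)
      have e1 : p ⬝ᵥ (R *ᵥ (N *ᵥ p - Matrix.diagonal p *ᵥ (C *ᵥ p)))
          = (∑ i, r i * p i * (N *ᵥ p) i) - ∑ i, r i * p i^2 * (C *ᵥ p) i := by
        unfold dotProduct
        rw [← Finset.sum_sub_distrib]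
        congr 1; funext i
        rw [Matrix.mulVec_diagonal]
        simp only [Pi.sub_apply, Matrix.mulVec_diagonal]
        ring
      have e2 : p ⬝ᵥ (K₀ *ᵥ p) = -(2 * ∑ i, r i * p i * (N *ᵥ p) i) := by
        have h1 : K₀ *ᵥ p = -(Nᵀ *ᵥ (R *ᵥ p) + R *ᵥ (N *ᵥ p)) := by
          rw [hK₀def, Matrix.neg_mulVec, Matrix.add_mulVec, ← Matrix.mulVec_mulVec,
            ← Matrix.mulVec_mulVec]
        rw [h1, dotProduct_neg, dotProduct_add]
        have h2 : p ⬝ᵥ (Nᵀ *ᵥ (R *ᵥ p)) = (N *ᵥ p) ⬝ᵥ (R *ᵥ p) := by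
          rw [Matrix.dotProduct_mulVec, Matrix.vecMul_transpose]
        have h3 : (N *ᵥ p) ⬝ᵥ (R *ᵥ p) = ∑ i, r i * p i * (N *ᵥ p) i := by
          unfold dotProduct
          congr 1; funext i
          rw [Matrix.mulVec_diagonal]
          ring
        have h4 : p ⬝ᵥ (R *ᵥ (N *ᵥ p)) = ∑ i, r i * p i * (N *ᵥ p) i := by
          unfold dotProduct
          congr 1; funext i
          rw [Matrix.mulVec_diagonal]
          ring
        rw [h2, h3, h4]
        ring
      have e3 : 0 ≤ ∑ i, r i * p i^2 * (C *ᵥ p) i :=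
        Finset.sum_nonneg fun i _ => mul_nonneg (mul_nonneg (hr i).le (sq_nonneg _)) (hCp i)
      have e4 : p ⬝ᵥ (Matrix.diagonal d *ᵥ p) = ∑ i, d i * p i ^ 2 := by
        unfold dotProduct
        congr 1; funext i
        rw [Matrix.mulVec_diagonal]
        ring
      have e5 : ∑ i, d i * p i ^ 2 ≤ p ⬝ᵥ (K₀ *ᵥ p) :=
        quad_comp K₀ v hK₀sym hK₀off hv0 p
      rw [e1, e4]
      linarith
    · -- convergence
      intro p hdp h0
      have hform : ∀ q : Fin n → ℝ, ∀ i,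
          ((N *ᵥ q) - Matrix.diagonal q *ᵥ (C *ᵥ q)) i
            = (1 - q i) * (C *ᵥ q) i - δ i * q i := by
        intro q i
        have h1 : (N *ᵥ q) i = (C *ᵥ q) i - δ i * q i := by
          rw [hNdef, Matrix.sub_mulVec]
          simp only [Pi.sub_apply, Matrix.mulVec_diagonal]
        simp only [Pi.sub_apply, Matrix.mulVec_diagonal, h1]
        ring
      have hd2 : ∀ i t, HasDerivAt (fun s => p s i)
          ((1 - p t i) * (C *ᵥ p t) i - δ i * p t i) t := by
        intro i t
        have := hdp i t
        rwa [hform (p t) i] at this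
      have hbox := box_invariant C hCnn δ hδ p hd2 h0
      exact conv_lemma C hCnn δ p hd2 (fun t ht i => hbox t ht i) w hw1 (1/ε)
        (by positivity) hNTw
end

section
/- Let G be a strongly connected digraph with adjacency matrix A, and consider an equilibrium p* ∈ [0,1)ⁿ of the SIS dynamics, so that p*_i = ξ*_i/(δ_i + ξ*_i) with ξ*_i = Σ_{j≠i} a_{ji}β_j p*_j. If p*_k > 0 for some node k, then p*_i > 0 for every node i. -/
open Matrix Set Filter

theorem stmt16 {n : ℕ} (A : Matrix (Fin n) (Fin n) ℝ) (hA : ∀ i j, 0 ≤ A i j)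
    (hconn : ∀ i j, Relation.ReflTransGen (fun a b => A a b ≠ 0) i j)
    (β δ : Fin n → ℝ) (hβ : ∀ i, 0 < β i) (hδ : ∀ i, 0 < δ i)
    (p : Fin n → ℝ) (hp : ∀ i, 0 ≤ p i ∧ p i < 1)
    (ξ : Fin n → ℝ)
    (hξ : ∀ i, ξ i = ∑ j ∈ Finset.univ.filter (fun j => j ≠ i), A j i * β j * p j)
    (heq : ∀ i, p i = ξ i / (δ i + ξ i))
    (k : Fin n) (hk : 0 < p k) :
    ∀ i, 0 < p i := by
  have hξnn : ∀ i, 0 ≤ ξ i := by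
    intro i
    rw [hξ i]
    apply Finset.sum_nonneg
    intro j _
    exact mul_nonneg (mul_nonneg (hA j i) (hβ j).le) (hp j).1
  have hstep : ∀ a b, A a b ≠ 0 → 0 < p a → 0 < p b := by
    intro a b hab hpa
    rcases eq_or_ne a b with rfl | hne
    · exact hpa
    · have hterm : 0 < A a b * β a * p a :=
        mul_pos (mul_pos ((hA a b).lt_of_ne (Ne.symm hab)) (hβ a)) hpa
      have hξb : 0 < ξ b := by
        rw [hξ b]
        refine Finset.sum_pos' (fun j _ => mul_nonneg (mul_nonneg (hA j b) (hβ j).le) (hp j).1) ?_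
        exact ⟨a, Finset.mem_filter.mpr ⟨Finset.mem_univ a, hne⟩, hterm⟩
      rw [heq b]
      exact div_pos hξb (add_pos (hδ b) hξb)
  intro i
  induction (hconn k i) with
  | refl => exact hk
  | tail _ hedge ih => exact hstep _ _ hedge ih
end

section
/- In the concave game where node i's objective is f_i(p_i, p_{−i}) = −(δ_i/2)p_i² + p_i(1 − p_i/2) Σ_{j≠i} a_{ji} β_j p_j with δ_i > 0, β_j > 0, a_{ji} ≥ 0, and p ∈ [0,1]ⁿ, the function f_i is strictly concave in p_i for each fixed p_{−i} ∈ [0,1]^{n−1}, and the partial derivative ∂f_i/∂p_i evaluated at p equals the i-th component of the SIS vector field: −δ_i p_i + (1 − p_i) Σ_{j≠i} a_{ji} β_j p_j. -/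
open Matrix Set Filter

theorem stmt17 {n : ℕ} (A : Matrix (Fin n) (Fin n) ℝ) (hA : ∀ i j, 0 ≤ A i j)
    (β δ : Fin n → ℝ) (hβ : ∀ j, 0 < β j) (hδ : ∀ j, 0 < δ j)
    (i : Fin n) (p : Fin n → ℝ) (hp : ∀ j, p j ∈ Set.Icc (0:ℝ) 1)
    (S : ℝ)
    (hS : S = ∑ j ∈ Finset.univ.filter (fun j => j ≠ i), A j i * β j * p j) :
    StrictConcaveOn ℝ Set.univ
      (fun x : ℝ => -(δ i / 2) * x ^ 2 + x * (1 - x / 2) * S) ∧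
    ∀ x : ℝ, HasDerivAt
      (fun x : ℝ => -(δ i / 2) * x ^ 2 + x * (1 - x / 2) * S)
      (-(δ i) * x + (1 - x) * S) x := by
  have hS0 : 0 ≤ S := by
    rw [hS]
    refine Finset.sum_nonneg fun j _ => ?_
    exact mul_nonneg (mul_nonneg (hA j i) (hβ j).le) (hp j).1
  set c : ℝ := -(δ i / 2) - S / 2 with hc
  have hcneg : c < 0 := by
    have := hδ i
    simp only [hc]
    linarith
  have hfun : (fun x : ℝ => -(δ i / 2) * x ^ 2 + x * (1 - x / 2) * S)
      = fun x : ℝ => c * x ^ 2 + S * x := by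
    funext x; simp only [hc]; ring
  have hder : ∀ x : ℝ, HasDerivAt (fun x : ℝ => c * x ^ 2 + S * x) (2 * c * x + S) x := by
    intro x
    have h1 := (((hasDerivAt_pow 2 x).const_mul c).add ((hasDerivAt_id x).const_mul S) :
      HasDerivAt (fun y : ℝ => c * y ^ 2 + S * y) _ x)
    refine h1.congr_deriv ?_
    push_cast; ring
  have hderiv : deriv (fun x : ℝ => c * x ^ 2 + S * x) = fun x => 2 * c * x + S := by
    funext x; exact (hder x).deriv
  constructor
  · rw [hfun]
    refine strictConcaveOn_of_deriv2_neg convex_univ (by fun_prop) ?_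
    intro x hx
    simp only [Function.iterate_succ, Function.iterate_zero, Function.comp_apply, id_eq]
    rw [hderiv]
    have h2 : HasDerivAt (fun x : ℝ => 2 * c * x + S) (2 * c) x := by
      simpa using ((hasDerivAt_id x).const_mul (2 * c)).add_const S
    rw [h2.deriv]
    linarith
  · intro x
    rw [hfun]
    convert hder x using 1
    simp only [hc]; ring
end

section
/- Let X be an n×n irreducible Metzler matrix with μ(X) = 0, let ν ≫ 0 satisfy Xν = 0 and ξ ≫ 0 satisfy Xᵀξ = 0, and let R = diag(ξ_i/ν_i). Then the symmetric matrix M = XᵀR + RX is Metzler, irreducible, and satisfies Mν = 0; consequently its largest eigenvalue is 0 and M is negative semidefinite. -/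
open Matrix Set Filter

/-- A symmetric Metzler matrix with a positive vector in its kernel has
nonpositive quadratic form. -/
lemma quad_nonpos_aux {n : ℕ} (M : Matrix (Fin n) (Fin n) ℝ) (ν : Fin n → ℝ)
    (hν : ∀ i, 0 < ν i) (hsym : ∀ i j, M i j = M j i)
    (hmet : ∀ i j, i ≠ j → 0 ≤ M i j) (hMν : M *ᵥ ν = 0) (v : Fin n → ℝ) :
    v ⬝ᵥ (M *ᵥ v) ≤ 0 := by
  set w : Fin n → ℝ := fun i => v i / ν i with hw
  have hv : ∀ i, v i = w i * ν i := fun i =>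
    (div_mul_cancel₀ (v i) (hν i).ne').symm
  have hrow : ∀ i, ∑ j, M i j * ν j = 0 := fun i => by
    have := congrFun hMν i
    simpa [Matrix.mulVec, dotProduct] using this
  set A : Fin n → Fin n → ℝ := fun i j => M i j * ν i * ν j with hA
  have hQ : v ⬝ᵥ (M *ᵥ v) = ∑ i, ∑ j, A i j * (w i * w j) := by
    simp only [dotProduct, Matrix.mulVec, Finset.mul_sum, hA]
    refine Finset.sum_congr rfl fun i _ => Finset.sum_congr rfl fun j _ => ?_
    rw [hv i, hv j]; ring
  have hS1 : ∑ i, ∑ j, A i j * w i ^ 2 = 0 := by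
    refine Finset.sum_eq_zero fun i _ => ?_
    have : ∑ j, A i j * w i ^ 2 = (ν i * w i ^ 2) * ∑ j, M i j * ν j := by
      rw [Finset.mul_sum]
      exact Finset.sum_congr rfl fun j _ => by simp [hA]; ring
    rw [this, hrow, mul_zero]
  have hS2 : ∑ i, ∑ j, A i j * w j ^ 2 = 0 := by
    rw [Finset.sum_comm]
    refine Finset.sum_eq_zero fun j _ => ?_
    have : ∑ i, A i j * w j ^ 2 = (ν j * w j ^ 2) * ∑ i, M j i * ν i := by
      rw [Finset.mul_sum]
      exact Finset.sum_congr rfl fun i _ => by simp [hA, hsym i j]; ring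
    rw [this, hrow, mul_zero]
  have hT : 0 ≤ ∑ i, ∑ j, A i j * (w i - w j) ^ 2 := by
    refine Finset.sum_nonneg fun i _ => Finset.sum_nonneg fun j _ => ?_
    rcases eq_or_ne i j with rfl | hij
    · simp
    · exact mul_nonneg (mul_nonneg (mul_nonneg (hmet i j hij) (hν i).le) (hν j).le) (sq_nonneg _)
  have hexp : ∑ i, ∑ j, A i j * (w i - w j) ^ 2
      = (∑ i, ∑ j, A i j * w i ^ 2) + (∑ i, ∑ j, A i j * w j ^ 2)
        - 2 * ∑ i, ∑ j, A i j * (w i * w j) := by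
    rw [Finset.mul_sum, ← Finset.sum_add_distrib, ← Finset.sum_sub_distrib]
    refine Finset.sum_congr rfl fun i _ => ?_
    rw [Finset.mul_sum, ← Finset.sum_add_distrib, ← Finset.sum_sub_distrib]
    exact Finset.sum_congr rfl fun j _ => by ring
  rw [hQ]
  rw [hS1, hS2] at hexp
  linarith

/-- A real matrix with nonpositive quadratic form and a nonzero kernel vector
has spectral abscissa zero. -/
lemma abscissa_zero_aux {n : ℕ} (M : Matrix (Fin n) (Fin n) ℝ) (ν : Fin n → ℝ)
    (hν0 : ν ≠ 0) (hMν : M *ᵥ ν = 0)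
    (hquad : ∀ v : Fin n → ℝ, v ⬝ᵥ (M *ᵥ v) ≤ 0) :
    spectralAbscissa M = 0 := by
  set Mc : Matrix (Fin n) (Fin n) ℂ := M.map Complex.ofReal with hMc
  have hdet : Mc.det = 0 := by
    rw [← Matrix.exists_mulVec_eq_zero_iff]
    refine ⟨fun i => (ν i : ℂ), ?_, ?_⟩
    · intro h
      apply hν0
      funext i
      have := congrFun h i
      simpa using this
    · funext i
      have := (Complex.ofRealHom.map_mulVec M ν i)
      simp only [Complex.ofRealHom_eq_coe] at this
      rw [hMc]
      have h2 : ((M *ᵥ ν) i : ℂ) = 0 := by rw [hMν]; simp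
      rw [this] at h2
      exact h2
  have h0mem : (0 : ℂ) ∈ matSpec M := by
    rw [matSpec, spectrum.mem_iff]
    intro hu
    rw [map_zero, zero_sub, isUnit_iff_isUnit_det] at hu
    rw [Matrix.det_neg, hdet, mul_zero] at hu
    exact hu.ne_zero rfl
  have hub : ∀ z ∈ matSpec M, z.re ≤ 0 := by
    intro z hz
    rw [matSpec, spectrum.mem_iff] at hz
    rw [isUnit_iff_isUnit_det] at hz
    have hdz : (algebraMap ℂ (Matrix (Fin n) (Fin n) ℂ) z - Mc).det = 0 := by
      by_contra h
      exact hz (isUnit_iff_ne_zero.mpr h)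
    obtain ⟨u, hu0, hu⟩ := (Matrix.exists_mulVec_eq_zero_iff).mpr hdz
    have heig : Mc *ᵥ u = z • u := by
      have := hu
      rw [Matrix.sub_mulVec] at this
      have halg : algebraMap ℂ (Matrix (Fin n) (Fin n) ℂ) z = z • (1 : Matrix (Fin n) (Fin n) ℂ) := by
        rw [Algebra.algebraMap_eq_smul_one]
      rw [halg, Matrix.smul_mulVec, Matrix.one_mulVec] at this
      linear_combination (norm := module) -this
    set a : Fin n → ℝ := fun i => (u i).re with ha
    set b : Fin n → ℝ := fun i => (u i).im with hb
    have hcre : (star u ⬝ᵥ (Mc *ᵥ u)).re = a ⬝ᵥ (M *ᵥ a) + b ⬝ᵥ (M *ᵥ b) := by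
      simp only [dotProduct, Matrix.mulVec, Pi.star_apply, Complex.re_sum,
        Finset.mul_sum, hMc, Matrix.map_apply]
      rw [← Finset.sum_add_distrib]
      refine Finset.sum_congr rfl fun i _ => ?_
      rw [← Finset.sum_add_distrib]
      refine Finset.sum_congr rfl fun j _ => ?_
      simp [Complex.mul_re, RCLike.star_def, ha, hb]
    have hs : (star u ⬝ᵥ u) = ((∑ i, Complex.normSq (u i) : ℝ) : ℂ) := by
      simp only [dotProduct, Pi.star_apply, RCLike.star_def, Complex.ofReal_sum]
      exact Finset.sum_congr rfl fun i _ => by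
        rw [mul_comm, Complex.mul_conj]
    have hspos : 0 < ∑ i, Complex.normSq (u i) := by
      have hne : ∃ i, u i ≠ 0 := by
        by_contra h
        push_neg at h
        exact hu0 (funext h)
      obtain ⟨i, hi⟩ := hne
      exact Finset.sum_pos' (fun i _ => Complex.normSq_nonneg _)
        ⟨i, Finset.mem_univ i, Complex.normSq_pos.mpr hi⟩
    have hc : star u ⬝ᵥ (Mc *ᵥ u) = z * (star u ⬝ᵥ u) := by
      rw [heig, dotProduct_smul, smul_eq_mul]
    have hzre : z.re * (∑ i, Complex.normSq (u i)) = a ⬝ᵥ (M *ᵥ a) + b ⬝ᵥ (M *ᵥ b) := by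
      rw [← hcre, hc, hs]
      simp [Complex.mul_re]
    have hle : a ⬝ᵥ (M *ᵥ a) + b ⬝ᵥ (M *ᵥ b) ≤ 0 := add_nonpos (hquad a) (hquad b)
    nlinarith [hspos]
  rw [spectralAbscissa]
  apply le_antisymm
  · exact csSup_le ⟨0, ⟨0, h0mem, rfl⟩⟩ (by rintro x ⟨z, hz, rfl⟩; exact hub z hz)
  · exact le_csSup ⟨0, by rintro x ⟨z, hz, rfl⟩; exact hub z hz⟩ ⟨0, h0mem, rfl⟩

theorem stmt18 {n : ℕ} (X : Matrix (Fin n) (Fin n) ℝ) (hM : IsMetzler X)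
    (hI : MatIrreducible X) (hμ : spectralAbscissa X = 0)
    (ν ξ : Fin n → ℝ) (hν : ∀ i, 0 < ν i) (hξ : ∀ i, 0 < ξ i)
    (hXν : X *ᵥ ν = 0) (hXξ : Xᵀ *ᵥ ξ = 0)
    (R M : Matrix (Fin n) (Fin n) ℝ)
    (hR : R = Matrix.diagonal (fun i => ξ i / ν i))
    (hMdef : M = Xᵀ * R + R * X) :
    IsMetzler M ∧ MatIrreducible M ∧ M *ᵥ ν = 0 ∧
      spectralAbscissa M = 0 ∧ ∀ v : Fin n → ℝ, v ⬝ᵥ (M *ᵥ v) ≤ 0 := by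
  have hMentry : ∀ i j, M i j = X j i * (ξ j / ν j) + (ξ i / ν i) * X i j := by
    intro i j
    simp [hMdef, hR, Matrix.mul_diagonal, Matrix.diagonal_mul, Matrix.transpose_apply]
  have hratio : ∀ i, 0 < ξ i / ν i := fun i => div_pos (hξ i) (hν i)
  have hMet : IsMetzler M := by
    intro i j hij
    rw [hMentry]
    exact add_nonneg (mul_nonneg (hM j i hij.symm) (hratio j).le)
      (mul_nonneg (hratio i).le (hM i j hij))
  have hsym : ∀ i j, M i j = M j i := by
    intro i j
    rw [hMentry, hMentry]
    ring
  have hMν : M *ᵥ ν = 0 := by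
    have hRν : R *ᵥ ν = ξ := by
      funext i
      simp [hR, Matrix.mulVec_diagonal]
      rw [div_mul_cancel₀ _ (hν i).ne']
    rw [hMdef, Matrix.add_mulVec, ← Matrix.mulVec_mulVec, ← Matrix.mulVec_mulVec,
      hRν, hXξ, hXν]
    simp
  have hquad : ∀ v : Fin n → ℝ, v ⬝ᵥ (M *ᵥ v) ≤ 0 :=
    quad_nonpos_aux M ν hν hsym hMet hMν
  refine ⟨hMet, ?_, hMν, ?_, hquad⟩
  · intro S hS hSu
    obtain ⟨i, hiS, j, hjS, hij⟩ := hI S hS hSu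
    refine ⟨i, hiS, j, hjS, ?_⟩
    have hne : i ≠ j := fun h => hjS (h ▸ hiS)
    rw [hMentry]
    have h1 : 0 < (ξ i / ν i) * X i j :=
      mul_pos (hratio i) (lt_of_le_of_ne (hM i j hne) (Ne.symm hij))
    have h2 : 0 ≤ X j i * (ξ j / ν j) := mul_nonneg (hM j i hne.symm) (hratio j).le
    positivity
  · rcases Nat.eq_zero_or_pos n with hn | hn
    · subst hn
      have hempty : matSpec M = ∅ := by
        rw [matSpec]
        ext z
        simp only [Set.mem_empty_iff_false, iff_false, spectrum.mem_iff, not_not]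
        exact isUnit_of_subsingleton _
      rw [spectralAbscissa, hempty]
      simp [Real.sSup_empty]
    · have hν0 : ν ≠ 0 := by
        intro h
        have := hν ⟨0, hn⟩
        rw [h] at this
        simpa using this
      exact abscissa_zero_aux M ν hν0 hMν hquad
end
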